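/- arXiv:0804.2528 — 4 statements merged into one kernel-verified Lean document; each statement's English description precedes it below -/
import Mathlib

section
/- Fix an integer q ≥ 2 and set H = 1 − 1/(2q). Then lim_{n→∞} (1/(n log n)) Σ_{k,l=0}^{n−1} ρ_H(k−l)^q = 2 c_q; equivalently, the constant σ_H² := lim_{n→∞} (q!/(n log n)) Σ_{k,l=0}^{n−1} ρ_H(k−l)^q exists and equals 2 q! ((2q−1)(q−1)/(2q²))^q. -/
open Finset Filter

/-- Covariance of unit increments of fBm with Hurst index `H`. -/
noncomputable def rho (H : ℝ) (r : ℤ) : ℝ :=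
  (|(r:ℝ) + 1| ^ (2*H) - 2 * |(r:ℝ)| ^ (2*H) + |(r:ℝ) - 1| ^ (2*H)) / 2

open Set Topology Real


lemma hcont_aux (p : ℝ) (s : ℝ) : ContinuousAt (fun x : ℝ => (1 + s*x) ^ p) 0 := by
  have h1 : ContinuousAt (fun x : ℝ => 1 + s*x) 0 := by fun_prop
  exact h1.rpow_const (Or.inl (by norm_num))

lemma aux_lim1 {a : ℝ} (ha1 : 1 < a) (ha2 : a < 2) :
    Tendsto (fun x : ℝ => (a*(1+x)^(a-1) - a*(1-x)^(a-1))/(2*x)) (𝓝[>] (0:ℝ)) (𝓝 (a*(a-1))) := by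
  have hda : ∀ x ∈ Ioo (0:ℝ) (1/2), HasDerivAt (fun x : ℝ => a*(1+x)^(a-1) - a*(1-x)^(a-1))
      (a*(a-1)*(1+x)^(a-2) + a*(a-1)*(1-x)^(a-2)) x := by
    intro x hx
    have h1 : HasDerivAt (fun x : ℝ => (1+x)^(a-1)) (1 * (a-1) * (1+x)^(a-1-1)) x :=
      ((hasDerivAt_id x).const_add 1).rpow_const (Or.inl (by simp only [id]; nlinarith [hx.1, hx.2]))
    have h2 : HasDerivAt (fun x : ℝ => (1-x)^(a-1)) ((-1) * (a-1) * (1-x)^(a-1-1)) x := by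
      have hb : HasDerivAt (fun x : ℝ => 1-x) (-1:ℝ) x := by
        exact (hasDerivAt_id' x).const_sub 1
      exact hb.rpow_const (Or.inl (by nlinarith [hx.2]))
    have h3 := (h1.const_mul a).sub (h2.const_mul a)
    refine h3.congr_deriv ?_
    have e : a - 1 - 1 = a - 2 := by ring
    rw [e]; ring
  have hdg : ∀ x ∈ Ioo (0:ℝ) (1/2), HasDerivAt (fun x : ℝ => 2*x) (2:ℝ) x := fun x _ => by
    simpa using (hasDerivAt_id x).const_mul 2
  refine HasDerivAt.lhopital_zero_right_on_Ioo (by norm_num) hda hdg (fun x _ => two_ne_zero) ?_ ?_ ?_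
  · have hF : ContinuousAt (fun x : ℝ => a*(1+1*x)^(a-1) - a*(1+(-1)*x)^(a-1)) 0 :=
      ((hcont_aux (a-1) 1).const_smul a).sub ((hcont_aux (a-1) (-1)).const_smul a)
    have := hF.tendsto.mono_left (nhdsWithin_le_nhds : 𝓝[>] (0:ℝ) ≤ 𝓝 0)
    simp only [mul_zero, add_zero, Real.one_rpow, one_mul, neg_one_mul] at this ⊢
    simpa using this.congr (fun x => by ring_nf)
  · have : Tendsto (fun x : ℝ => 2*x) (𝓝 (0:ℝ)) (𝓝 (2*0:ℝ)) :=
      (continuous_const.mul continuous_id).tendsto 0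
    simpa using this.mono_left nhdsWithin_le_nhds
  · have hF : ContinuousAt (fun x : ℝ => (a*(a-1)*(1+1*x)^(a-2) + a*(a-1)*(1+(-1)*x)^(a-2))/2) 0 :=
      (((hcont_aux (a-2) 1).const_smul (a*(a-1))).add ((hcont_aux (a-2) (-1)).const_smul (a*(a-1)))).div_const 2
    have := hF.tendsto.mono_left (nhdsWithin_le_nhds : 𝓝[>] (0:ℝ) ≤ 𝓝 0)
    simp only [mul_zero, add_zero, Real.one_rpow, mul_one, neg_one_mul] at this
    have h2 : (a*(a-1) + a*(a-1))/2 = a*(a-1) := by ring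
    rw [h2] at this
    apply this.congr
    intro x
    have e1 : 1 + 1*x = 1 + x := by ring
    have e2 : 1 + -x = 1 - x := by ring
    rw [e1, e2]

lemma aux_lim2 {a : ℝ} (ha1 : 1 < a) (ha2 : a < 2) :
    Tendsto (fun x : ℝ => ((1+x)^a + (1-x)^a - 2)/(x^2)) (𝓝[>] (0:ℝ)) (𝓝 (a*(a-1))) := by
  have hda : ∀ x ∈ Ioo (0:ℝ) (1/2), HasDerivAt (fun x : ℝ => (1+x)^a + (1-x)^a - 2)
      (a*(1+x)^(a-1) - a*(1-x)^(a-1)) x := by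
    intro x hx
    have h1 : HasDerivAt (fun x : ℝ => (1+x)^a) (1 * a * (1+x)^(a-1)) x :=
      ((hasDerivAt_id x).const_add 1).rpow_const (Or.inl (by simp only [id]; nlinarith [hx.1, hx.2]))
    have h2 : HasDerivAt (fun x : ℝ => (1-x)^a) ((-1) * a * (1-x)^(a-1)) x := by
      have hb : HasDerivAt (fun x : ℝ => 1-x) (-1:ℝ) x := by
        exact (hasDerivAt_id' x).const_sub 1
      exact hb.rpow_const (Or.inl (by nlinarith [hx.1, hx.2]))
    have h3 := (h1.add h2).sub_const 2
    refine h3.congr_deriv ?_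
    ring
  have hdg : ∀ x ∈ Ioo (0:ℝ) (1/2), HasDerivAt (fun x : ℝ => x^2) (2*x) x := fun x _ => by
    simpa using hasDerivAt_pow 2 x
  refine HasDerivAt.lhopital_zero_right_on_Ioo (by norm_num) hda hdg
    (fun x hx => by have := hx.1; positivity) ?_ ?_ (aux_lim1 ha1 ha2)
  · have hF : ContinuousAt (fun x : ℝ => (1+1*x)^a + (1+(-1)*x)^a - 2) 0 :=
      ((hcont_aux a 1).add (hcont_aux a (-1))).sub continuousAt_const
    have := hF.tendsto.mono_left (nhdsWithin_le_nhds : 𝓝[>] (0:ℝ) ≤ 𝓝 0)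
    simp only [mul_zero, add_zero, Real.one_rpow, one_mul, neg_one_mul] at this
    have h0 : (1:ℝ) + 1 - 2 = 0 := by norm_num
    rw [h0] at this
    apply this.congr
    intro x
    have e2 : 1 + -x = 1 - x := by ring
    rw [e2]
  · have : Tendsto (fun x : ℝ => x^2) (𝓝 (0:ℝ)) (𝓝 ((0:ℝ)^2)) :=
      (continuous_pow 2).tendsto 0
    simpa using this.mono_left (nhdsWithin_le_nhds : 𝓝[>] (0:ℝ) ≤ 𝓝 0)

lemma key_eq (q : ℕ) (hq : 2 ≤ q) (r : ℕ) (hr : 1 ≤ r) :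
    (r:ℝ) * rho (1 - 1/(2*(q:ℝ))) ((r:ℕ):ℤ) ^ q
      = ((((1:ℝ)+((r:ℝ))⁻¹)^(2 - 1/(q:ℝ)) + (1-((r:ℝ))⁻¹)^(2 - 1/(q:ℝ)) - 2)/(((r:ℝ)⁻¹)^2*2))^q := by
  have hq0 : (0:ℝ) < (q:ℝ) := by positivity
  have hR1 : (1:ℝ) ≤ (r:ℝ) := by exact_mod_cast hr
  have hR0 : (0:ℝ) < (r:ℝ) := lt_of_lt_of_le one_pos hR1
  have hinv : (0:ℝ) ≤ (r:ℝ)⁻¹ := by positivity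
  have hxle : (0:ℝ) ≤ 1 - (r:ℝ)⁻¹ := by
    have : (r:ℝ)⁻¹ ≤ 1 := inv_le_one_of_one_le₀ hR1
    linarith
  have h2H : 2*(1 - 1/(2*(q:ℝ))) = 2 - 1/(q:ℝ) := by field_simp
  have hrho : rho (1 - 1/(2*(q:ℝ))) ((r:ℕ):ℤ)
      = ((r:ℝ)^(2 - 1/(q:ℝ)) * ((1+(r:ℝ)⁻¹)^(2 - 1/(q:ℝ)) + (1-(r:ℝ)⁻¹)^(2 - 1/(q:ℝ)) - 2))/2 := by
    rw [rho, h2H]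
    simp only [Int.cast_natCast]
    have c1 : |(r:ℝ) + 1| = (r:ℝ) * (1+(r:ℝ)⁻¹) := by
      rw [abs_of_nonneg (by linarith)]; field_simp
    have c2 : |(r:ℝ)| = (r:ℝ) := abs_of_nonneg (by linarith)
    have c3 : |(r:ℝ) - 1| = (r:ℝ) * (1-(r:ℝ)⁻¹) := by
      rw [abs_of_nonneg (by linarith)]; field_simp
    rw [c1, c2, c3, Real.mul_rpow hR0.le (by linarith), Real.mul_rpow hR0.le hxle]
    ring
  rw [hrho]
  set N : ℝ := (1+(r:ℝ)⁻¹)^(2 - 1/(q:ℝ)) + (1-(r:ℝ)⁻¹)^(2 - 1/(q:ℝ)) - 2 with hN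
  have hnum : (((r:ℝ)^(2 - 1/(q:ℝ)) * N)/2)^q = (r:ℝ)^((2 - 1/(q:ℝ))*(q:ℝ)) * N^q / 2^q := by
    rw [div_pow, mul_pow, ← Real.rpow_natCast ((r:ℝ)^(2 - 1/(q:ℝ))) q, ← Real.rpow_mul hR0.le]
  have hkey : (r:ℝ) * (r:ℝ)^((2 - 1/(q:ℝ))*(q:ℝ)) = (r:ℝ)^(2*q) := by
    have haq : (2 - 1/(q:ℝ))*(q:ℝ) = 2*(q:ℝ) - 1 := by field_simp
    rw [haq, ← Real.rpow_natCast (r:ℝ) (2*q)]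
    push_cast
    calc (r:ℝ) * (r:ℝ)^(2*(q:ℝ)-1) = (r:ℝ)^(1:ℝ) * (r:ℝ)^(2*(q:ℝ)-1) := by rw [Real.rpow_one]
      _ = (r:ℝ)^(1 + (2*(q:ℝ)-1)) := (Real.rpow_add hR0 _ _).symm
      _ = (r:ℝ)^(2*(q:ℝ)) := by ring_nf
  have hrhs : (N/(((r:ℝ)⁻¹)^2*2))^q = N^q * (r:ℝ)^(2*q)/2^q := by
    rw [div_pow, mul_pow, ← pow_mul, inv_pow, div_eq_div_iff (by positivity) (by positivity)]
    field_simp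
  rw [hnum, hrhs, ← hkey]
  ring

open Finset in
lemma key_lim (q : ℕ) (hq : 2 ≤ q) :
    Tendsto (fun r : ℕ => (r:ℝ) * rho (1 - 1/(2*(q:ℝ))) ((r:ℕ):ℤ) ^ q) atTop
      (𝓝 (((2*(q:ℝ)-1)*((q:ℝ)-1)/(2*(q:ℝ)^2))^q)) := by
  have hq0 : (0:ℝ) < (q:ℝ) := by positivity
  have hq2 : (2:ℝ) ≤ (q:ℝ) := by exact_mod_cast hq
  set a : ℝ := 2 - 1/(q:ℝ) with ha
  have ha1 : 1 < a := by
    rw [ha]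
    have : 1/(q:ℝ) ≤ 1/2 := by
      apply one_div_le_one_div_of_le <;> linarith
    linarith
  have ha2 : a < 2 := by
    rw [ha]
    have : 0 < 1/(q:ℝ) := by positivity
    linarith
  have h2 : Tendsto (fun x : ℝ => ((1+x)^a + (1-x)^a - 2)/(x^2*2)) (𝓝[>] (0:ℝ))
      (𝓝 (a*(a-1)/2)) := by
    have := (aux_lim2 ha1 ha2).div_const 2
    apply this.congr
    intro x
    rw [div_div]
  have h1 : Tendsto (fun x : ℝ => (((1+x)^a + (1-x)^a - 2)/(x^2*2))^q) (𝓝[>] (0:ℝ))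
      (𝓝 ((a*(a-1)/2)^q)) := h2.pow q
  have hx : Tendsto (fun r : ℕ => ((r:ℝ))⁻¹) atTop (𝓝[>] (0:ℝ)) := by
    apply tendsto_nhdsWithin_of_tendsto_nhds_of_eventually_within
    · exact tendsto_inv_atTop_zero.comp tendsto_natCast_atTop_atTop
    · filter_upwards [eventually_gt_atTop 0] with r hr
      have : (0:ℝ) < (r:ℝ) := by exact_mod_cast hr
      exact inv_pos.2 this
  have h3 := h1.comp hx
  have hval : (a*(a-1)/2)^q = ((2*(q:ℝ)-1)*((q:ℝ)-1)/(2*(q:ℝ)^2))^q := by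
    congr 1
    rw [ha]
    field_simp
    ring
  rw [← hval]
  apply h3.congr'
  filter_upwards [eventually_ge_atTop 1] with r hr
  simp only [Function.comp]
  exact (key_eq q hq r hr).symm

open Finset in
lemma toeplitz {w : ℕ → ℝ} {c : ℝ} (h : Tendsto (fun r : ℕ => ((r:ℝ)+1) * w r) atTop (𝓝 c)) :
    Tendsto (fun n : ℕ => (∑ r ∈ range n, w r) / Real.log n) atTop (𝓝 c) := by
  set g : ℕ → ℝ := fun r => 1/((r:ℝ)+1) with hg
  have hg0 : ∀ r, 0 ≤ g r := fun r => by positivity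
  have hgsum : Tendsto (fun n => ∑ r ∈ range n, g r) atTop atTop :=
    tendsto_sum_range_one_div_nat_succ_atTop
  set e : ℕ → ℝ := fun r => w r - c * g r with he
  have helit : e =o[atTop] g := by
    have h0 : (fun r : ℕ => ((r:ℝ)+1) * w r - c) =o[atTop] (fun _ : ℕ => (1:ℝ)) :=
      (Asymptotics.isLittleO_one_iff ℝ).2 (by simpa using h.sub_const c)
    have := h0.mul_isBigO (Asymptotics.isBigO_refl g atTop)
    simp only [one_mul] at this
    apply this.congr' _ (Filter.EventuallyEq.refl _ _)
    filter_upwards with r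
    rw [he, hg]
    have hr1 : ((r:ℝ)+1) ≠ 0 := by positivity
    field_simp
  have hsum := helit.sum_range hg0 hgsum
  have hSe : Tendsto (fun n => (∑ r ∈ range n, e r) / (∑ r ∈ range n, g r)) atTop (𝓝 0) :=
    hsum.tendsto_div_nhds_zero
  have hharm : ∀ n : ℕ, ∑ r ∈ range n, g r = ((harmonic n : ℚ) : ℝ) := by
    intro n
    rw [harmonic]
    push_cast
    apply Finset.sum_congr rfl
    intro i _
    simp [hg]
  have hlog : Tendsto (fun n : ℕ => Real.log n) atTop atTop :=
    Real.tendsto_log_atTop.comp tendsto_natCast_atTop_atTop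
  have hHlog : Tendsto (fun n : ℕ => (∑ r ∈ range n, g r) / Real.log n) atTop (𝓝 1) := by
    have hd : Tendsto (fun n : ℕ => (((harmonic n : ℚ):ℝ) - Real.log n) / Real.log n) atTop
        (𝓝 0) := Real.tendsto_harmonic_sub_log.div_atTop hlog
    have : Tendsto (fun n : ℕ => 1 + (((harmonic n : ℚ):ℝ) - Real.log n) / Real.log n) atTop
        (𝓝 (1 + 0)) := hd.const_add 1
    rw [add_zero] at this
    apply this.congr'
    filter_upwards [eventually_ge_atTop 2] with n hn
    have hlogn : Real.log n ≠ 0 := by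
      have : (2:ℝ) ≤ (n:ℝ) := by exact_mod_cast hn
      have := Real.log_pos (by linarith)
      linarith
    rw [hharm]
    field_simp
    ring
  have hfin : Tendsto (fun n : ℕ => (∑ r ∈ range n, e r) / Real.log n
      + c * ((∑ r ∈ range n, g r) / Real.log n)) atTop (𝓝 (0 + c * 1)) := by
    apply Filter.Tendsto.add _ (hHlog.const_mul c)
    have hmul := hSe.mul hHlog
    rw [mul_one] at hmul
    apply hmul.congr'
    filter_upwards [eventually_ge_atTop 1] with n hn
    have hSg : (0:ℝ) < ∑ r ∈ range n, g r := by
      apply Finset.sum_pos (fun r _ => by positivity)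
      exact Finset.nonempty_range_iff.2 (by omega)
    rw [div_mul_div_comm, mul_comm (∑ r ∈ range n, e r), mul_div_mul_left _ _ hSg.ne']
  rw [zero_add, mul_one] at hfin
  apply hfin.congr
  intro n
  have hsw : ∑ r ∈ range n, w r = (∑ r ∈ range n, e r) + c * ∑ r ∈ range n, g r := by
    rw [Finset.mul_sum, ← Finset.sum_add_distrib]
    apply Finset.sum_congr rfl
    intro r _
    simp only [he]
    ring
  rw [hsw, add_div, mul_div_assoc]

open Finset in
lemma sum_rearrange (F : ℤ → ℝ) (hF : ∀ z, F (-z) = F z) (n : ℕ) :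
    ∑ k ∈ range n, ∑ l ∈ range n, F ((k:ℤ) - (l:ℤ))
      = ∑ r ∈ range n, ((n:ℝ) - (r:ℝ)) * (if r = 0 then F 0 else 2 * F (r:ℤ)) := by
  set W : ℕ → ℝ := fun r => if r = 0 then F 0 else 2 * F (r:ℤ) with hW
  induction n with
  | zero => simp
  | succ n ih =>
    have hA : ∑ k ∈ range n, F ((k:ℤ) - (n:ℤ)) = ∑ j ∈ range n, F ((j:ℤ) + 1) := by
      rw [← Finset.sum_range_reflect (fun k => F ((k:ℤ) - (n:ℤ))) n]
      apply Finset.sum_congr rfl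
      intro j hj
      rw [Finset.mem_range] at hj
      have h1 : ((n - 1 - j : ℕ) : ℤ) = (n:ℤ) - 1 - (j:ℤ) := by omega
      rw [h1, ← hF]
      congr 1
      ring
    have hB : ∑ l ∈ range (n+1), F ((n:ℤ) - (l:ℤ)) = ∑ j ∈ range (n+1), F (j:ℤ) := by
      rw [← Finset.sum_range_reflect (fun j => F (j:ℤ)) (n+1)]
      apply Finset.sum_congr rfl
      intro j hj
      rw [Finset.mem_range] at hj
      congr 1
      omega
    have lhs_eq : ∑ k ∈ range (n+1), ∑ l ∈ range (n+1), F ((k:ℤ) - (l:ℤ))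
        = (∑ k ∈ range n, ∑ l ∈ range n, F ((k:ℤ) - (l:ℤ)))
          + (∑ k ∈ range n, F ((k:ℤ) - (n:ℤ))) + ∑ l ∈ range (n+1), F ((n:ℤ) - (l:ℤ)) := by
      rw [Finset.sum_range_succ]
      congr 1
      rw [← Finset.sum_add_distrib]
      apply Finset.sum_congr rfl
      intro k _
      rw [Finset.sum_range_succ]
    have rhs_eq : ∑ r ∈ range (n+1), (((n+1:ℕ):ℝ) - (r:ℝ)) * W r
        = (∑ r ∈ range n, ((n:ℝ) - (r:ℝ)) * W r) + ∑ r ∈ range (n+1), W r := by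
      have e1 : ∀ r : ℕ, (((n+1:ℕ):ℝ) - (r:ℝ)) * W r = ((n:ℝ)-(r:ℝ))*W r + W r := by
        intro r; push_cast; ring
      calc ∑ r ∈ range (n+1), (((n+1:ℕ):ℝ) - (r:ℝ)) * W r
          = ∑ r ∈ range (n+1), (((n:ℝ)-(r:ℝ))*W r + W r) :=
            Finset.sum_congr rfl (fun r _ => e1 r)
        _ = (∑ r ∈ range (n+1), ((n:ℝ)-(r:ℝ))*W r) + ∑ r ∈ range (n+1), W r :=
            Finset.sum_add_distrib
        _ = (∑ r ∈ range n, ((n:ℝ)-(r:ℝ))*W r) + ∑ r ∈ range (n+1), W r := by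
            rw [Finset.sum_range_succ]
            simp
    have hs : ∀ j:ℕ, W (j+1) = 2 * F ((j:ℤ)+1) := by
      intro j
      rw [hW]
      simp only [Nat.succ_ne_zero, if_false]
      norm_num
    have h0 : W 0 = F 0 := by rw [hW]; simp
    have hw : ∑ r ∈ range (n+1), W r = F 0 + 2 * ∑ j ∈ range n, F ((j:ℤ) + 1) := by
      rw [Finset.sum_range_succ' W n, Finset.sum_congr rfl (fun j _ => hs j), h0]
      rw [Finset.mul_sum]
      ring
    have hB' : ∑ j ∈ range (n+1), F (j:ℤ) = F 0 + ∑ j ∈ range n, F ((j:ℤ)+1) := by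
      have : ∀ j : ℕ, F ((j+1:ℕ):ℤ) = F ((j:ℤ)+1) := by
        intro j; norm_cast
      rw [Finset.sum_range_succ' (fun j => F (j:ℤ)) n,
        Finset.sum_congr rfl (fun j _ => this j)]
      simp [add_comm]
    rw [lhs_eq, rhs_eq, ih, hA, hB, hw, hB']
    ring



/-- Value of `σ_H²`: for `q ≥ 2` and `H = 1−1/(2q)`,
`(1/(n log n)) Σ_{k,l=0}^{n−1} ρ_H(k−l)^q → 2 c_q` with `c_q = ((2q−1)(q−1)/(2q²))^q`. -/
theorem sigma_H_sq (q : ℕ) (hq : 2 ≤ q) :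
    Tendsto (fun n : ℕ =>
        (1 / ((n:ℝ) * Real.log n)) *
          ∑ k ∈ range n, ∑ l ∈ range n, rho (1 - 1/(2*(q:ℝ))) ((k:ℤ) - (l:ℤ)) ^ q)
      atTop
      (nhds (2 * ((2*(q:ℝ) - 1) * ((q:ℝ) - 1) / (2*(q:ℝ)^2)) ^ q)) := by
  set c : ℝ := ((2*(q:ℝ) - 1) * ((q:ℝ) - 1) / (2*(q:ℝ)^2)) ^ q with hc
  set F : ℤ → ℝ := fun z => rho (1 - 1/(2*(q:ℝ))) z ^ q with hFdef
  set W : ℕ → ℝ := fun r => if r = 0 then F 0 else 2 * F (r:ℤ) with hWdef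
  have hFe : ∀ z : ℤ, F (-z) = F z := by
    intro z
    rw [hFdef]
    simp only
    congr 1
    rw [rho, rho]
    push_cast
    have c1 : |-(z:ℝ) + 1| = |(z:ℝ) - 1| := by rw [← abs_neg]; congr 1; ring
    have c3 : |-(z:ℝ) - 1| = |(z:ℝ) + 1| := by rw [← abs_neg]; congr 1; ring
    rw [c1, c3, abs_neg]
    ring
  have hu : Tendsto (fun r : ℕ => (r:ℝ) * F (r:ℤ)) atTop (𝓝 c) := key_lim q hq
  have hinv : Tendsto (fun r : ℕ => ((r:ℝ))⁻¹) atTop (𝓝 0) :=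
    tendsto_inv_atTop_zero.comp tendsto_natCast_atTop_atTop
  have hF0 : Tendsto (fun r : ℕ => F (r:ℤ)) atTop (𝓝 0) := by
    have := hu.mul hinv
    rw [mul_zero] at this
    apply this.congr'
    filter_upwards [eventually_ge_atTop 1] with r hr
    have hr0 : ((r:ℝ)) ≠ 0 := by positivity
    field_simp
  have hW1 : Tendsto (fun r : ℕ => ((r:ℝ)+1) * W r) atTop (𝓝 (2*c)) := by
    have h2 := (hu.const_mul 2).add (hF0.const_mul 2)
    rw [mul_zero, add_zero] at h2
    apply h2.congr'
    filter_upwards [eventually_ge_atTop 1] with r hr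
    have : W r = 2 * F (r:ℤ) := if_neg (by omega)
    rw [this]
    ring
  have C1 : Tendsto (fun n : ℕ => (∑ r ∈ range n, W r) / Real.log n) atTop (𝓝 (2*c)) :=
    toeplitz hW1
  have hrw : Tendsto (fun r : ℕ => (r:ℝ) * W r) atTop (𝓝 (2*c)) := by
    have h2 := hu.const_mul 2
    apply h2.congr'
    filter_upwards [eventually_ge_atTop 1] with r hr
    have : W r = 2 * F (r:ℤ) := if_neg (by omega)
    rw [this]
    ring
  have hloginv : Tendsto (fun n : ℕ => (Real.log n)⁻¹) atTop (𝓝 0) :=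
    (Real.tendsto_log_atTop.comp tendsto_natCast_atTop_atTop).inv_tendsto_atTop
  have C2 : Tendsto (fun n : ℕ => (∑ r ∈ range n, (r:ℝ) * W r) / ((n:ℝ) * Real.log n)) atTop
      (𝓝 0) := by
    have h3 := hrw.cesaro.mul hloginv
    rw [mul_zero] at h3
    apply h3.congr
    intro n
    rw [div_eq_mul_inv, mul_inv]
    ring
  have hfin := C1.sub C2
  rw [sub_zero] at hfin
  have : (2 * ((2*(q:ℝ) - 1) * ((q:ℝ) - 1) / (2*(q:ℝ)^2)) ^ q) = 2*c := by rw [hc]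
  rw [this]
  apply hfin.congr'
  filter_upwards [eventually_ge_atTop 2] with n hn
  have hn0 : (0:ℝ) < (n:ℝ) := by positivity
  have hlogn : 0 < Real.log n := Real.log_pos (by exact_mod_cast by omega)
  have hre := sum_rearrange F hFe n
  have hsplit : ∑ r ∈ range n, ((n:ℝ) - (r:ℝ)) * W r
      = (n:ℝ) * (∑ r ∈ range n, W r) - ∑ r ∈ range n, (r:ℝ) * W r := by
    rw [Finset.mul_sum, ← Finset.sum_sub_distrib]
    apply Finset.sum_congr rfl
    intro r _
    ring
  rw [show (∑ r ∈ range n, W r) / Real.log n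
        - (∑ r ∈ range n, (r:ℝ) * W r) / ((n:ℝ) * Real.log n)
      = (1 / ((n:ℝ) * Real.log n)) * ((n:ℝ) * (∑ r ∈ range n, W r)
        - ∑ r ∈ range n, (r:ℝ) * W r) by field_simp]
  rw [← hsplit, ← hre]
end

section
/- Fix an integer q ≥ 2 and set H = 1 − 1/(2q). There exists a constant C > 0 such that for every integer n ≥ 2, | Σ_{r=1}^{n} ρ_H(r)^q − c_q log n | ≤ C. -/
open Finset

lemma abs_pow_sub_pow_le' (a b M : ℝ) (q : ℕ) (ha : |a| ≤ M) (hb : |b| ≤ M) :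
    |a ^ q - b ^ q| ≤ q * M ^ (q - 1) * |a - b| := by
  have hM : 0 ≤ M := le_trans (abs_nonneg a) ha
  rw [← geom_sum₂_mul a b q, abs_mul]
  have h1 : |∑ i ∈ range q, a ^ i * b ^ (q - 1 - i)| ≤ q * M ^ (q - 1) := by
    calc |∑ i ∈ range q, a ^ i * b ^ (q - 1 - i)|
        ≤ ∑ i ∈ range q, |a ^ i * b ^ (q - 1 - i)| := Finset.abs_sum_le_sum_abs _ _
      _ ≤ ∑ i ∈ range q, M ^ (q - 1) := by
          refine Finset.sum_le_sum fun i hi => ?_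
          rw [abs_mul, abs_pow, abs_pow]
          calc |a| ^ i * |b| ^ (q - 1 - i) ≤ M ^ i * M ^ (q - 1 - i) := by
                exact mul_le_mul (pow_le_pow_left₀ (abs_nonneg a) ha i)
                  (pow_le_pow_left₀ (abs_nonneg b) hb _) (by positivity) (by positivity)
            _ = M ^ (q - 1) := by
                rw [← pow_add]
                congr 1
                have := Finset.mem_range.mp hi
                omega
      _ = q * M ^ (q - 1) := by rw [Finset.sum_const, card_range, nsmul_eq_mul]
  exact mul_le_mul_of_nonneg_right h1 (abs_nonneg _)

lemma rpow_near_one {p : ℝ} (hp1 : 1 ≤ p) (hp2 : p ≤ 2) {a : ℝ}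
    (ha : a ∈ Set.Icc (1/2:ℝ) (3/2)) : |a ^ (p-2) - 1| ≤ 4 * |a - 1| := by
  have h1 : (1:ℝ) ∈ Set.Icc (1/2:ℝ) (3/2) := by norm_num
  have bound : ∀ t ∈ Set.Icc (1/2:ℝ) (3/2),
      ‖(fun t : ℝ => 1 * (p-2) * t ^ (p-2-1)) t‖ ≤ 4 := by
    intro t ht
    have ht0 : (0:ℝ) < t := lt_of_lt_of_le (by norm_num) ht.1
    have hb1 : t ^ (p-2-1) ≤ (1/2:ℝ) ^ (p-2-1) :=
      Real.rpow_le_rpow_of_nonpos (by norm_num) ht.1 (by linarith)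
    have hb2 : (1/2:ℝ) ^ (p-2-1) ≤ (1/2:ℝ) ^ (-2:ℝ) :=
      Real.rpow_le_rpow_of_exponent_ge (by norm_num) (by norm_num) (by linarith)
    have hb3 : ((1:ℝ)/2) ^ (-2:ℝ) = 4 := by
      rw [show (-2:ℝ) = ((-2:ℤ):ℝ) by norm_num, Real.rpow_intCast]; norm_num
    have hpos : 0 ≤ t ^ (p-2-1) := (Real.rpow_pos_of_pos ht0 _).le
    have habs : |p - 2| ≤ 1 := by rw [abs_le]; constructor <;> linarith
    simp only [Real.norm_eq_abs, abs_mul, abs_one, one_mul, abs_of_nonneg hpos]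
    calc |p-2| * t ^ (p-2-1) ≤ 1 * 4 := by
          apply mul_le_mul habs (by linarith) hpos (by norm_num)
      _ = 4 := by norm_num
  have key := (convex_Icc (1/2:ℝ) (3/2)).norm_image_sub_le_of_norm_hasDerivWithin_le
    (f := fun t => t ^ (p-2)) (f' := fun t => 1 * (p-2) * t ^ (p-2-1)) (C := 4)
    (fun t ht => ((hasDerivAt_id t).rpow_const (Or.inl (by
      have := ht.1; simp only [id]; positivity))).hasDerivWithinAt)
    bound h1 ha
  simpa [Real.one_rpow, Real.norm_eq_abs] using key

lemma taylor_bound {p : ℝ} (hp1 : 1 ≤ p) (hp2 : p ≤ 2) :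
    ∀ x ∈ Set.Icc (0:ℝ) (1/2),
      |(1+x) ^ p + (1-x) ^ p - 2 - p * (p-1) * x^2| ≤ 3 * x^3 := by
  set u : ℝ → ℝ := fun x => (1+x) ^ p + (1-x) ^ p - 2 - p * (p-1) * x^2 with hu
  set u' : ℝ → ℝ := fun x => p * (1+x) ^ (p-1) - p * (1-x) ^ (p-1) - 2 * p * (p-1) * x with hu'
  set u'' : ℝ → ℝ := fun x =>
    p * (p-1) * (1+x) ^ (p-2) + p * (p-1) * (1-x) ^ (p-2) - 2 * p * (p-1) with hu''
  have hne1 : ∀ x : ℝ, x ∈ Set.Icc (0:ℝ) (1/2) → (1:ℝ) + x ≠ 0 := by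
    intro x hx; have := hx.1; positivity
  have hne2 : ∀ x : ℝ, x ∈ Set.Icc (0:ℝ) (1/2) → (1:ℝ) - x ≠ 0 := by
    intro x hx; have := hx.2; have : (0:ℝ) < 1 - x := by linarith
    exact ne_of_gt this
  have hd1 : ∀ x ∈ Set.Icc (0:ℝ) (1/2), HasDerivAt u (u' x) x := by
    intro x hx
    have h1 : HasDerivAt (fun y : ℝ => (1+y) ^ p) (1 * p * (1+x) ^ (p-1)) x :=
      ((hasDerivAt_id x).const_add 1).rpow_const (Or.inl (hne1 x hx))
    have h2 : HasDerivAt (fun y : ℝ => (1-y) ^ p) ((-1) * p * (1-x) ^ (p-1)) x :=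
      ((hasDerivAt_id x).const_sub 1).rpow_const (Or.inl (hne2 x hx))
    have h3 : HasDerivAt (fun y : ℝ => p * (p-1) * y^2) (p * (p-1) * (2 * x^1)) x :=
      (hasDerivAt_pow 2 x).const_mul _
    have := ((h1.add h2).sub_const 2).sub h3
    refine this.congr_deriv ?_
    simp [hu']; ring
  have hd2 : ∀ x ∈ Set.Icc (0:ℝ) (1/2), HasDerivAt u' (u'' x) x := by
    intro x hx
    have h1 : HasDerivAt (fun y : ℝ => (1+y) ^ (p-1)) (1 * (p-1) * (1+x) ^ (p-1-1)) x :=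
      ((hasDerivAt_id x).const_add 1).rpow_const (Or.inl (hne1 x hx))
    have h2 : HasDerivAt (fun y : ℝ => (1-y) ^ (p-1)) ((-1) * (p-1) * (1-x) ^ (p-1-1)) x :=
      ((hasDerivAt_id x).const_sub 1).rpow_const (Or.inl (hne2 x hx))
    have h3 : HasDerivAt (fun y : ℝ => 2 * p * (p-1) * y) (2 * p * (p-1)) x := by
      simpa using (hasDerivAt_id x).const_mul (2 * p * (p-1))
    have := ((h1.const_mul p).sub (h2.const_mul p)).sub h3
    refine this.congr_deriv ?_
    simp only [hu'']
    rw [show p - 1 - 1 = p - 2 by ring]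
    ring
  have bound2 : ∀ x ∈ Set.Ico (0:ℝ) (1/2), ‖u'' x‖ ≤ 16 * x := by
    intro x hx
    obtain ⟨hx0, hx2⟩ := hx
    have e1 : |(1+x) ^ (p-2) - 1| ≤ 4 * x := by
      have := rpow_near_one hp1 hp2 (a := 1+x) (by constructor <;> [linarith; linarith])
      simpa [abs_of_nonneg hx0] using this
    have e2 : |(1-x) ^ (p-2) - 1| ≤ 4 * x := by
      have := rpow_near_one hp1 hp2 (a := 1-x) (by constructor <;> [linarith; linarith])
      have e : |1 - x - 1| = x := by rw [show (1:ℝ) - x - 1 = -x by ring, abs_neg, abs_of_nonneg hx0]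
      rwa [e] at this
    have hpp : 0 ≤ p * (p-1) := by nlinarith
    have hpp2 : p * (p-1) ≤ 2 := by nlinarith
    have : u'' x = p * (p-1) * (((1+x) ^ (p-2) - 1) + ((1-x) ^ (p-2) - 1)) := by
      simp only [hu'']; ring
    rw [Real.norm_eq_abs, this, abs_mul, abs_of_nonneg hpp]
    calc p * (p-1) * |((1+x) ^ (p-2) - 1) + ((1-x) ^ (p-2) - 1)|
        ≤ 2 * (4 * x + 4 * x) := by
          apply mul_le_mul hpp2 ((abs_add_le _ _).trans (add_le_add e1 e2)) (abs_nonneg _) (by norm_num)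
      _ = 16 * x := by ring
  have step1 : ∀ x ∈ Set.Icc (0:ℝ) (1/2), ‖u' x‖ ≤ 8 * x^2 := by
    have hu'0 : u' 0 = 0 := by simp [hu']
    exact fun x hx => image_norm_le_of_norm_deriv_right_le_deriv_boundary
      (f := u') (f' := u'') (B := fun x => 8 * x^2) (B' := fun x => 16 * x)
      (fun y hy => ((hd2 y hy).continuousAt).continuousWithinAt)
      (fun y hy => (hd2 y (Set.Ico_subset_Icc_self hy)).hasDerivWithinAt)
      (by simp [hu'0])
      (fun y => by simpa using ((hasDerivAt_pow 2 y).const_mul 8).congr_deriv (by ring))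
      bound2 hx
  have step2 : ∀ x ∈ Set.Icc (0:ℝ) (1/2), ‖u x‖ ≤ 3 * x^3 := by
    have hu0 : u 0 = 0 := by simp [hu]; norm_num
    exact fun x hx => image_norm_le_of_norm_deriv_right_le_deriv_boundary
      (f := u) (f' := u') (B := fun x => 3 * x^3) (B' := fun x => 9 * x^2)
      (fun y hy => ((hd1 y hy).continuousAt).continuousWithinAt)
      (fun y hy => (hd1 y (Set.Ico_subset_Icc_self hy)).hasDerivWithinAt)
      (by simp [hu0])
      (fun y => by simpa using ((hasDerivAt_pow 3 y).const_mul 3).congr_deriv (by ring))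
      (fun y hy => le_trans (step1 y (Set.Ico_subset_Icc_self hy)) (by show _ ≤ 9 * y ^ 2; nlinarith [sq_nonneg y]))
      hx
  intro x hx
  simpa [Real.norm_eq_abs, hu] using step2 x hx

lemma rho_est {p : ℝ} (hp1 : 1 ≤ p) (hp2 : p ≤ 2) (m : ℕ) (hm : 2 ≤ m) :
    |rho (p/2) (m:ℤ) - (p*(p-1)/2) * (m:ℝ) ^ (p - 2)| ≤ 2 * (m:ℝ) ^ (p - 3) := by
  have hm2 : (2:ℝ) ≤ (m:ℝ) := by exact_mod_cast hm
  have hm0 : (0:ℝ) < (m:ℝ) := by linarith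
  set x : ℝ := 1 / (m:ℝ) with hxdef
  have hx0 : 0 < x := by positivity
  have hx2 : x ≤ 1/2 := by
    rw [hxdef]; rw [div_le_div_iff₀ hm0 (by norm_num)]; linarith
  -- rewrite rho
  have hrho : rho (p/2) (m:ℤ) = (((m:ℝ)+1) ^ p - 2 * (m:ℝ) ^ p + ((m:ℝ)-1) ^ p) / 2 := by
    unfold rho
    rw [show 2*(p/2) = p by ring]
    push_cast
    rw [abs_of_nonneg (by linarith : (0:ℝ) ≤ (m:ℝ)+1), abs_of_nonneg (by linarith : (0:ℝ) ≤ (m:ℝ)),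
      abs_of_nonneg (by linarith : (0:ℝ) ≤ (m:ℝ)-1)]
  have e1 : ((m:ℝ)+1) ^ p = (m:ℝ) ^ p * (1+x) ^ p := by
    rw [← Real.mul_rpow hm0.le (by linarith : (0:ℝ) ≤ 1+x)]
    congr 1
    rw [hxdef]; field_simp
  have e2 : ((m:ℝ)-1) ^ p = (m:ℝ) ^ p * (1-x) ^ p := by
    rw [← Real.mul_rpow hm0.le (by linarith : (0:ℝ) ≤ 1-x)]
    congr 1
    rw [hxdef]; field_simp
  have e3 : (m:ℝ) ^ (p-2) = (m:ℝ) ^ p * x^2 := by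
    rw [Real.rpow_sub hm0, hxdef]
    rw [show ((2:ℝ)) = ((2:ℕ):ℝ) by norm_num, Real.rpow_natCast]
    field_simp
  have e4 : (m:ℝ) ^ (p-3) = (m:ℝ) ^ p * x^3 := by
    rw [Real.rpow_sub hm0, hxdef]
    rw [show ((3:ℝ)) = ((3:ℕ):ℝ) by norm_num, Real.rpow_natCast]
    field_simp
  have key := taylor_bound hp1 hp2 x ⟨hx0.le, hx2⟩
  have hmp : (0:ℝ) < (m:ℝ) ^ p := Real.rpow_pos_of_pos hm0 p
  have main : rho (p/2) (m:ℤ) - (p*(p-1)/2) * (m:ℝ) ^ (p - 2)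
      = ((m:ℝ) ^ p / 2) * ((1+x) ^ p + (1-x) ^ p - 2 - p * (p-1) * x^2) := by
    rw [hrho, e1, e2, e3]; ring
  rw [main, abs_mul, abs_of_nonneg (by positivity : (0:ℝ) ≤ (m:ℝ)^p/2)]
  calc (m:ℝ)^p/2 * |(1+x) ^ p + (1-x) ^ p - 2 - p * (p-1) * x^2|
      ≤ (m:ℝ)^p/2 * (3*x^3) := by
        apply mul_le_mul_of_nonneg_left key (by positivity)
    _ ≤ 2 * (m:ℝ) ^ (p-3) := by rw [e4]; nlinarith [hmp, pow_pos hx0 3]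

lemma step_est (q : ℕ) (hq : 2 ≤ q) (m : ℕ) (hm : 2 ≤ m) :
    |rho (1 - 1/(2*(q:ℝ))) (m:ℤ) ^ q
        - ((2*(q:ℝ) - 1) * ((q:ℝ) - 1) / (2*(q:ℝ)^2)) ^ q * (1/(m:ℝ))|
      ≤ (2 * q * 3^(q-1) : ℝ) / (m:ℝ)^2 := by
  have hq1 : (1:ℝ) ≤ (q:ℝ) := by exact_mod_cast Nat.one_le_of_lt hq
  have hq2 : (2:ℝ) ≤ (q:ℝ) := by exact_mod_cast hq
  have hq0 : (0:ℝ) < (q:ℝ) := by linarith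
  set p : ℝ := 2 - 1/(q:ℝ) with hpdef
  clear_value p
  have hp1 : 1 ≤ p := by
    rw [hpdef]; have : 1/(q:ℝ) ≤ 1 := by rw [div_le_one hq0]; linarith
    linarith
  have hp2 : p ≤ 2 := by
    rw [hpdef]; have : 0 < 1/(q:ℝ) := by positivity
    linarith
  have hH : 1 - 1/(2*(q:ℝ)) = p/2 := by
    rw [hpdef]
    rw [eq_div_iff (two_ne_zero)]
    field_simp
  have hb : ((2*(q:ℝ) - 1) * ((q:ℝ) - 1) / (2*(q:ℝ)^2)) = p*(p-1)/2 := by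
    rw [hpdef]; field_simp; ring
  have hm2 : (2:ℝ) ≤ (m:ℝ) := by exact_mod_cast hm
  have hm0 : (0:ℝ) < (m:ℝ) := by linarith
  have hm1 : (1:ℝ) ≤ (m:ℝ) := by linarith
  set a : ℝ := rho (1 - 1/(2*(q:ℝ))) (m:ℤ) with hadef
  set c : ℝ := (p*(p-1)/2) * (m:ℝ) ^ (p - 2) with hcdef
  clear_value a c
  have hest : |a - c| ≤ 2 * (m:ℝ) ^ (p - 3) := by
    rw [hadef, hcdef, hH]; exact rho_est hp1 hp2 m hm
  have hp0 : (0:ℝ) ≤ p := by linarith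
  have hbb0 : 0 ≤ p*(p-1)/2 := by
    have := mul_nonneg hp0 (by linarith : (0:ℝ) ≤ p - 1)
    linarith
  have hbb1 : p*(p-1)/2 ≤ 1 := by
    have := mul_le_mul hp2 (by linarith : p - 1 ≤ 1) (by linarith) (by norm_num : (0:ℝ) ≤ 2)
    linarith
  have hmp2 : (0:ℝ) < (m:ℝ) ^ (p-2) := Real.rpow_pos_of_pos hm0 _
  have hmp3 : (0:ℝ) < (m:ℝ) ^ (p-3) := Real.rpow_pos_of_pos hm0 _
  have hmono : (m:ℝ) ^ (p-3) ≤ (m:ℝ) ^ (p-2) :=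
    Real.rpow_le_rpow_of_exponent_le hm1 (by linarith)
  have hc : |c| ≤ (m:ℝ) ^ (p-2) := by
    rw [hcdef, abs_mul, abs_of_nonneg hbb0, abs_of_nonneg hmp2.le]
    nlinarith
  have ha : |a| ≤ 3 * (m:ℝ) ^ (p-2) := by
    have : |a| ≤ |c| + |a - c| := by
      calc |a| = |c + (a - c)| := by ring_nf
        _ ≤ |c| + |a - c| := abs_add_le _ _
    calc |a| ≤ |c| + |a - c| := this
      _ ≤ (m:ℝ)^(p-2) + 2 * (m:ℝ)^(p-3) := add_le_add hc hest
      _ ≤ 3 * (m:ℝ)^(p-2) := by nlinarith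
  have hc3 : |c| ≤ 3 * (m:ℝ) ^ (p-2) := hc.trans (by nlinarith)
  have key := abs_pow_sub_pow_le' a c (3 * (m:ℝ)^(p-2)) q ha hc3
  -- identify c ^ q
  have hcq : c ^ q = ((2*(q:ℝ) - 1) * ((q:ℝ) - 1) / (2*(q:ℝ)^2)) ^ q * (1/(m:ℝ)) := by
    rw [hcdef, mul_pow, hb]
    congr 1
    rw [← Real.rpow_natCast ((m:ℝ)^(p-2)) q, ← Real.rpow_mul hm0.le]
    rw [show (p-2) * (q:ℝ) = -1 by rw [hpdef]; field_simp; ring]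
    rw [Real.rpow_neg_one]
    exact (one_div _).symm
  -- bound RHS of key
  have hq1' : 1 ≤ q := Nat.one_le_of_lt hq
  have hcast : ((q-1 : ℕ) : ℝ) = (q:ℝ) - 1 := by
    have := Nat.cast_sub hq1' (R := ℝ)
    simpa using this
  have hrhs : (q:ℝ) * (3 * (m:ℝ)^(p-2)) ^ (q-1) * |a - c|
      ≤ (2 * q * 3^(q-1) : ℝ) / (m:ℝ)^2 := by
    have e5 : ((m:ℝ)^(p-2)) ^ (q-1) = (m:ℝ) ^ ((p-2) * ((q:ℝ)-1)) := by
      rw [← Real.rpow_natCast ((m:ℝ)^(p-2)) (q-1), ← Real.rpow_mul hm0.le, hcast]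
    have e6 : (m:ℝ) ^ ((p-2) * ((q:ℝ)-1)) * (m:ℝ) ^ (p-3) = (m:ℝ) ^ (-2:ℝ) := by
      rw [← Real.rpow_add hm0]
      congr 1
      rw [hpdef]; field_simp; ring
    have e7 : (m:ℝ) ^ (-2:ℝ) = 1 / (m:ℝ)^2 := by
      rw [show (-2:ℝ) = -((2:ℕ):ℝ) by norm_num, Real.rpow_neg hm0.le, Real.rpow_natCast]
      exact (one_div _).symm
    calc (q:ℝ) * (3 * (m:ℝ)^(p-2)) ^ (q-1) * |a - c|
        ≤ (q:ℝ) * (3 * (m:ℝ)^(p-2)) ^ (q-1) * (2 * (m:ℝ)^(p-3)) := by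
          apply mul_le_mul_of_nonneg_left hest (by positivity)
      _ = 2 * (q:ℝ) * 3^(q-1) * ((m:ℝ) ^ ((p-2) * ((q:ℝ)-1)) * (m:ℝ) ^ (p-3)) := by
          rw [mul_pow, e5]; ring
      _ = (2 * q * 3^(q-1) : ℝ) / (m:ℝ)^2 := by
          rw [e6, e7]; ring
  calc |a ^ q - ((2*(q:ℝ) - 1) * ((q:ℝ) - 1) / (2*(q:ℝ)^2)) ^ q * (1/(m:ℝ))|
      = |a ^ q - c ^ q| := by rw [hcq]
    _ ≤ (q:ℝ) * (3 * (m:ℝ)^(p-2)) ^ (q-1) * |a - c| := key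
    _ ≤ (2 * q * 3^(q-1) : ℝ) / (m:ℝ)^2 := hrhs

lemma log_est {y : ℝ} (hy : 2 ≤ y) : |Real.log y - Real.log (y-1) - 1/y| ≤ 2/y^2 := by
  have hy0 : (0:ℝ) < y := by linarith
  set x : ℝ := 1/y with hxdef
  have hx0 : 0 < x := by positivity
  have hx2 : x ≤ 1/2 := by rw [hxdef, div_le_div_iff₀ hy0 (by norm_num)]; linarith
  have h1 : |x| < 1 := by rw [abs_of_pos hx0]; linarith
  have key := Real.abs_log_sub_add_sum_range_le h1 1
  simp only [Finset.range_one, Finset.sum_singleton, pow_one] at key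
  have hlog : Real.log (1 - x) = Real.log (y-1) - Real.log y := by
    rw [show (1:ℝ) - x = (y-1)/y by rw [hxdef]; field_simp]
    rw [Real.log_div (by linarith) (by linarith)]
  rw [abs_of_pos hx0] at key
  have e : x ^ (0+1) / ((0:ℕ)+1) + Real.log (1-x) = -(Real.log y - Real.log (y-1) - 1/y) := by
    rw [hlog]; push_cast; rw [hxdef]; ring
  rw [e, abs_neg] at key
  calc |Real.log y - Real.log (y-1) - 1/y| ≤ x^2 / (1-x) := key
    _ ≤ 2/y^2 := by
      rw [hxdef]
      rw [div_le_div_iff₀ (by linarith) (by positivity)]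
      have : (1:ℝ)/y ≤ 1/2 := hx2
      have h12 : (1:ℝ) - 1/y ≥ 1/2 := by linarith
      calc (1/y)^2 * y^2 = 1 := by field_simp
        _ ≤ 2 * (1 - 1/y) := by linarith

/-- For `q ≥ 2` and `H = 1−1/(2q)`, there is `C > 0` such that for every `n ≥ 2`,
`|Σ_{r=1}^n ρ_H(r)^q − c_q log n| ≤ C` with `c_q = ((2q−1)(q−1)/(2q²))^q`. -/
theorem partial_sum_rho_pow (q : ℕ) (hq : 2 ≤ q) :
    ∃ C > 0, ∀ n : ℕ, 2 ≤ n →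
      |(∑ r ∈ Icc 1 n, rho (1 - 1/(2*(q:ℝ))) (r:ℤ) ^ q)
          - ((2*(q:ℝ) - 1) * ((q:ℝ) - 1) / (2*(q:ℝ)^2)) ^ q * Real.log n|
        ≤ C := by
  have hq2 : (2:ℝ) ≤ (q:ℝ) := by exact_mod_cast hq
  set cq : ℝ := ((2*(q:ℝ) - 1) * ((q:ℝ) - 1) / (2*(q:ℝ)^2)) ^ q with hcqdef
  set A : ℝ := (2 * q * 3^(q-1) : ℝ) + 2 with hAdef
  have hA2 : (2:ℝ) ≤ A := by
    rw [hAdef]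
    have : (0:ℝ) ≤ 2 * q * 3^(q-1) := by positivity
    linarith
  have hA0 : (0:ℝ) < A := by linarith
  set T : ℕ → ℝ := fun n =>
    (∑ r ∈ Icc 1 n, rho (1 - 1/(2*(q:ℝ))) (r:ℤ) ^ q) - cq * Real.log n with hTdef
  have hcq0 : 0 ≤ cq := by
    rw [hcqdef]
    apply pow_nonneg
    have h1 : (0:ℝ) ≤ 2*(q:ℝ) - 1 := by linarith
    have h2 : (0:ℝ) ≤ (q:ℝ) - 1 := by linarith
    positivity
  have hcq1 : cq ≤ 1 := by
    rw [hcqdef]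
    apply pow_le_one₀
    · have h1 : (0:ℝ) ≤ 2*(q:ℝ) - 1 := by linarith
      have h2 : (0:ℝ) ≤ (q:ℝ) - 1 := by linarith
      positivity
    · rw [div_le_one (by positivity)]
      nlinarith
  have gbound : ∀ n : ℕ, 2 ≤ n →
      |rho (1 - 1/(2*(q:ℝ))) ((n+1 : ℕ):ℤ) ^ q
        - cq * (Real.log ((n:ℝ)+1) - Real.log (n:ℝ))| ≤ A / ((n:ℝ)+1)^2 := by
    intro n hn
    have hn2 : (2:ℝ) ≤ (n:ℝ) := by exact_mod_cast hn
    have h1 := step_est q hq (n+1) (by omega)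
    have h2 := log_est (y := ((n:ℝ)+1)) (by linarith)
    have e1 : ((n:ℝ)+1) - 1 = (n:ℝ) := by ring
    rw [e1] at h2
    have ecast : ((n+1:ℕ):ℝ) = (n:ℝ)+1 := by push_cast; ring
    rw [ecast] at h1
    rw [← hcqdef] at h1
    calc |rho (1 - 1/(2*(q:ℝ))) ((n+1 : ℕ):ℤ) ^ q - cq * (Real.log ((n:ℝ)+1) - Real.log n)|
        = |(rho (1 - 1/(2*(q:ℝ))) ((n+1 : ℕ):ℤ) ^ q - cq * (1/((n:ℝ)+1)))
            + (-(cq * (Real.log ((n:ℝ)+1) - Real.log n - 1/((n:ℝ)+1))))| := by ring_nf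
      _ ≤ |rho (1 - 1/(2*(q:ℝ))) ((n+1 : ℕ):ℤ) ^ q - cq * (1/((n:ℝ)+1))|
            + |(-(cq * (Real.log ((n:ℝ)+1) - Real.log n - 1/((n:ℝ)+1))))| := abs_add_le _ _
      _ ≤ (2 * q * 3^(q-1) : ℝ) / ((n:ℝ)+1)^2 + 1 * (2/((n:ℝ)+1)^2) := by
          apply add_le_add h1
          rw [abs_neg, abs_mul, abs_of_nonneg hcq0]
          apply mul_le_mul hcq1 h2 (abs_nonneg _) (by norm_num)
      _ = A / ((n:ℝ)+1)^2 := by rw [hAdef]; ring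
  -- main induction
  have claim : ∀ n : ℕ, 2 ≤ n → |T n| ≤ |T 2| + A * (1/2 - 1/(n:ℝ)) := by
    intro n hn
    induction n, hn using Nat.le_induction with
    | base => norm_num
    | succ n hn ih =>
      have hn2 : (2:ℝ) ≤ (n:ℝ) := by exact_mod_cast hn
      have hsum : T (n+1) = T n
          + (rho (1 - 1/(2*(q:ℝ))) ((n+1 : ℕ):ℤ) ^ q
              - cq * (Real.log ((n:ℝ)+1) - Real.log (n:ℝ))) := by
        rw [hTdef]
        simp only
        rw [Finset.sum_Icc_succ_top (by omega : 1 ≤ n+1)]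
        have : Real.log ((n+1:ℕ):ℝ) = Real.log ((n:ℝ)+1) := by push_cast; ring_nf
        rw [this]
        ring
      have hfrac : A / ((n:ℝ)+1)^2 ≤ A * (1/(n:ℝ) - 1/((n:ℝ)+1)) := by
        have key : 1/((n:ℝ)+1)^2 ≤ 1/(n:ℝ) - 1/((n:ℝ)+1) := by
          rw [div_sub_div _ _ (by linarith : (n:ℝ) ≠ 0) (by linarith : (n:ℝ)+1 ≠ 0)]
          rw [div_le_div_iff₀ (by positivity) (by positivity)]
          nlinarith
        calc A / ((n:ℝ)+1)^2 = A * (1/((n:ℝ)+1)^2) := by ring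
          _ ≤ A * (1/(n:ℝ) - 1/((n:ℝ)+1)) := by
              apply mul_le_mul_of_nonneg_left key hA0.le
      calc |T (n+1)| ≤ |T n| + |rho (1 - 1/(2*(q:ℝ))) ((n+1 : ℕ):ℤ) ^ q
              - cq * (Real.log ((n:ℝ)+1) - Real.log (n:ℝ))| := by
            rw [hsum]; exact abs_add_le _ _
        _ ≤ (|T 2| + A * (1/2 - 1/(n:ℝ))) + A / ((n:ℝ)+1)^2 :=
            add_le_add ih (gbound n hn)
        _ ≤ (|T 2| + A * (1/2 - 1/(n:ℝ))) + A * (1/(n:ℝ) - 1/((n:ℝ)+1)) :=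
            add_le_add_right hfrac _
        _ = |T 2| + A * (1/2 - 1/((n:ℝ)+1)) := by ring
        _ = |T 2| + A * (1/2 - 1/((n+1:ℕ):ℝ)) := by push_cast; ring
  refine ⟨|T 2| + A, by positivity, ?_⟩
  intro n hn
  have hn2 : (2:ℝ) ≤ (n:ℝ) := by exact_mod_cast hn
  have := claim n hn
  have hT : |T n| ≤ |T 2| + A := by
    have h12 : 1/2 - 1/(n:ℝ) ≤ 1 := by
      have : 0 < 1/(n:ℝ) := by positivity
      linarith
    nlinarith [abs_nonneg (T 2)]
  exact hT
end

section
/- Fix an integer q ≥ 2 and set H = 1 − 1/(2q). There exists a constant C > 0 such that for every integer n ≥ 2, | 1 − (1/(2 c_q n log n)) Σ_{k,l=0}^{n−1} ρ_H(k−l)^q | ≤ C / log n. (This is the estimate 1 − A_{q−1}(n) = O(1/log n) from the proof of Theorem 1.2, since σ_H² = 2 q! c_q.) -/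
open Finset

open Set in
lemma mvt_step (α x : ℝ) (hα1 : 1 ≤ α) (hx : 1 ≤ x) :
    ∃ θ : ℝ, x - 1 < θ ∧ θ < x + 1 ∧ 0 < θ ∧
      (x+1) ^ α - 2 * x ^ α + (x-1) ^ α = α * (α-1) * θ ^ (α-2) := by
  have hα0 : (0:ℝ) ≤ α := by linarith
  have hcont : Continuous (fun y : ℝ => y ^ α) := Real.continuous_rpow_const hα0
  have hcont1 : Continuous (fun y : ℝ => (y+1) ^ α) :=
    (Real.continuous_rpow_const hα0).comp (continuous_id.add continuous_const)
  have h1 : x - 1 < x := by linarith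
  obtain ⟨η, hη, hηeq⟩ := exists_hasDerivAt_eq_slope
    (fun y => (y+1) ^ α - y ^ α) (fun y => α * (y+1) ^ (α-1) - α * y ^ (α-1)) h1
    ((hcont1.sub hcont).continuousOn) (by
      intro y hy
      have h1 : HasDerivAt (fun y : ℝ => (y+1) ^ α) (α * (y+1) ^ (α-1)) y := by
        have := (Real.hasDerivAt_rpow_const (x := y+1) (p := α) (Or.inr hα1)).comp y
          ((hasDerivAt_id y).add_const 1)
        simpa [Function.comp_def] using this
      have h2 : HasDerivAt (fun y : ℝ => y ^ α) (α * y ^ (α-1)) y :=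
        Real.hasDerivAt_rpow_const (Or.inr hα1)
      exact h1.sub h2)
  have hη0 : 0 ≤ η := by have := hη.1; simp at this ⊢; linarith
  obtain ⟨θ, hθ, hθeq⟩ := exists_hasDerivAt_eq_slope
    (fun y => y ^ (α-1)) (fun y => (α-1) * y ^ (α-1-1)) (show η < η + 1 by linarith)
    ((Real.continuous_rpow_const (by linarith)).continuousOn) (by
      intro y hy
      refine Real.hasDerivAt_rpow_const (Or.inl ?_)
      have := hy.1
      nlinarith [hη0]
      )
  simp only [Set.mem_Ioo] at hη hθ
  refine ⟨θ, by linarith, by linarith, by linarith, ?_⟩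
  have e1 : α * (η+1) ^ (α-1) - α * η ^ (α-1) =
      ((x+1) ^ α - x ^ α - ((x-1+1) ^ α - (x-1) ^ α)) / (x - (x-1)) := hηeq
  have e2 : (α-1) * θ ^ (α-1-1) = ((η+1) ^ (α-1) - η ^ (α-1)) / (η + 1 - η) := hθeq
  have hx1 : x - 1 + 1 = x := by ring
  rw [hx1] at e1
  have : α * ((α-1) * θ ^ (α-1-1)) = (x+1) ^ α - 2 * x ^ α + (x-1) ^ α := by
    rw [e2]
    field_simp at e1 ⊢
    linarith
  have hexp : α - 1 - 1 = α - 2 := by ring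
  rw [hexp] at this
  linarith [this]

lemma rho_pow_eq (q : ℕ) (hq : 2 ≤ q) (r : ℕ) (hr : 1 ≤ r) :
    ∃ θ : ℝ, (r:ℝ) - 1 < θ ∧ θ < (r:ℝ) + 1 ∧ 0 < θ ∧
      rho (1 - 1/(2*(q:ℝ))) (r:ℤ) ^ q
        = ((2*(q:ℝ) - 1) * ((q:ℝ) - 1) / (2*(q:ℝ)^2)) ^ q / θ := by
  have hq0 : (0:ℝ) < q := by exact_mod_cast Nat.lt_of_lt_of_le two_pos hq |>.trans_le le_rfl
  set α : ℝ := 2 - 1/(q:ℝ) with hα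
  have hαval : 2 * (1 - 1/(2*(q:ℝ))) = α := by simp only [hα]; field_simp
  have hα1 : (1:ℝ) ≤ α := by
    have : 1/(q:ℝ) ≤ 1 := by
      rw [div_le_one hq0]; exact_mod_cast Nat.one_le_of_lt hq
    simp only [hα]; linarith
  have hr1 : (1:ℝ) ≤ (r:ℝ) := by exact_mod_cast hr
  obtain ⟨θ, ht1, ht2, ht0, heq⟩ := mvt_step α r hα1 hr1
  refine ⟨θ, ht1, ht2, ht0, ?_⟩
  have hrho : rho (1 - 1/(2*(q:ℝ))) (r:ℤ) = (α*(α-1)/2) * θ ^ (α-2) := by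
    unfold rho
    rw [hαval]
    rw [abs_of_nonneg (by push_cast; linarith : (0:ℝ) ≤ ((r:ℤ):ℝ) + 1),
        abs_of_nonneg (by push_cast; linarith : (0:ℝ) ≤ ((r:ℤ):ℝ)),
        abs_of_nonneg (by push_cast; linarith : (0:ℝ) ≤ ((r:ℤ):ℝ) - 1)]
    push_cast
    rw [heq]; ring
  rw [hrho]
  have hcθ : ((α*(α-1)/2) * θ ^ (α-2)) ^ q = (α*(α-1)/2) ^ q * (θ ^ (α-2)) ^ q :=
    mul_pow _ _ _
  rw [hcθ]
  have hθq : (θ ^ (α-2)) ^ q = θ ^ ((α-2) * q) := by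
    rw [← Real.rpow_natCast (θ ^ (α-2)) q, ← Real.rpow_mul ht0.le]
  have hexp : (α - 2) * (q:ℝ) = -1 := by
    simp only [hα]; field_simp; ring
  rw [hθq, hexp, Real.rpow_neg_one]
  have hc : α*(α-1)/2 = (2*(q:ℝ) - 1) * ((q:ℝ) - 1) / (2*(q:ℝ)^2) := by
    simp only [hα]; field_simp; ring
  rw [hc]; ring

lemma double_sum (f : ℤ → ℝ) (n : ℕ) :
    ∑ k ∈ range n, ∑ l ∈ range n, f ((k:ℤ) - (l:ℤ))
      = ∑ r ∈ range n, ((n:ℝ) - (r:ℝ)) * (f (r:ℤ) + f (-(r:ℤ))) - (n:ℝ) * f 0 := by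
  induction n with
  | zero => simp
  | succ n ih =>
    have hL : ∑ k ∈ range (n+1), ∑ l ∈ range (n+1), f ((k:ℤ) - (l:ℤ))
        = (∑ k ∈ range n, ∑ l ∈ range n, f ((k:ℤ) - (l:ℤ)))
          + (∑ k ∈ range n, f ((k:ℤ) - (n:ℤ)))
          + (∑ l ∈ range n, f ((n:ℤ) - (l:ℤ))) + f 0 := by
      rw [Finset.sum_range_succ]
      rw [Finset.sum_range_succ (f := fun l => f ((n:ℤ) - (l:ℤ)))]
      have : ∀ k : ℕ, ∑ l ∈ range (n+1), f ((k:ℤ) - (l:ℤ))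
          = (∑ l ∈ range n, f ((k:ℤ) - (l:ℤ))) + f ((k:ℤ) - (n:ℤ)) := fun k =>
        Finset.sum_range_succ _ _
      rw [Finset.sum_congr rfl (fun k _ => this k), Finset.sum_add_distrib]
      simp; ring
    -- reindex the two cross sums
    have hk : ∑ k ∈ range n, f ((k:ℤ) - (n:ℤ)) = ∑ r ∈ range n, f (-((r:ℤ)+1)) := by
      rw [← Finset.sum_range_reflect]
      refine Finset.sum_congr rfl fun j hj => ?_
      have hj' : j < n := Finset.mem_range.mp hj
      congr 1
      have : ((n - 1 - j : ℕ) : ℤ) = (n:ℤ) - 1 - j := by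
        omega
      rw [this]; ring
    have hl : ∑ l ∈ range n, f ((n:ℤ) - (l:ℤ)) = ∑ r ∈ range n, f ((r:ℤ)+1) := by
      rw [← Finset.sum_range_reflect]
      refine Finset.sum_congr rfl fun j hj => ?_
      have hj' : j < n := Finset.mem_range.mp hj
      congr 1
      have : ((n - 1 - j : ℕ) : ℤ) = (n:ℤ) - 1 - j := by omega
      rw [this]; ring
    rw [hL, ih, hk, hl]
    have hR : ∑ r ∈ range (n+1), (((n:ℝ)+1) - (r:ℝ)) * (f (r:ℤ) + f (-(r:ℤ)))
        = (∑ r ∈ range n, ((n:ℝ) - (r:ℝ)) * (f (r:ℤ) + f (-(r:ℤ))))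
          + ∑ r ∈ range (n+1), (f (r:ℤ) + f (-(r:ℤ))) := by
      have : ∀ r ∈ range (n+1), (((n:ℝ)+1) - (r:ℝ)) * (f (r:ℤ) + f (-(r:ℤ)))
          = ((n:ℝ) - (r:ℝ)) * (f (r:ℤ) + f (-(r:ℤ))) + (f (r:ℤ) + f (-(r:ℤ))) := by
        intro r _; ring
      rw [Finset.sum_congr rfl this, Finset.sum_add_distrib, Finset.sum_range_succ
        (f := fun r => ((n:ℝ) - (r:ℝ)) * (f (r:ℤ) + f (-(r:ℤ))))]
      simp
    have hsplit : ∑ r ∈ range (n+1), (f (r:ℤ) + f (-(r:ℤ)))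
        = (f 0 + f 0) + ∑ r ∈ range n, (f ((r:ℤ)+1) + f (-((r:ℤ)+1))) := by
      rw [Finset.sum_range_succ' (f := fun r => (f (r:ℤ) + f (-(r:ℤ))))]
      simp only [Nat.cast_add, Nat.cast_one, Nat.cast_zero, neg_zero, Nat.cast_ofNat]
      ring
    push_cast
    rw [hR, hsplit, Finset.sum_add_distrib]
    push_cast
    ring

lemma log_ge (x : ℝ) (hx : 0 < x) : 1 - 1/x ≤ Real.log x := by
  have h := Real.log_le_sub_one_of_pos (show (0:ℝ) < 1/x by positivity)
  rw [Real.log_div one_ne_zero (ne_of_gt hx), Real.log_one] at h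
  have : (0:ℝ) - Real.log x ≤ 1/x - 1 := by simpa using h
  linarith

lemma log_diff_le (m : ℕ) (hm : 1 ≤ m) :
    Real.log ((m:ℝ)+1) - Real.log m ≤ 1/(m:ℝ) := by
  have hm0 : (0:ℝ) < m := by exact_mod_cast hm
  have := Real.log_le_sub_one_of_pos (show (0:ℝ) < ((m:ℝ)+1)/(m:ℝ) by positivity)
  rw [Real.log_div (by positivity) (ne_of_gt hm0)] at this
  have h2 : ((m:ℝ)+1)/(m:ℝ) - 1 = 1/(m:ℝ) := by field_simp; ring
  linarith [h2 ▸ this]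

lemma log_diff_ge (m : ℕ) (hm : 1 ≤ m) :
    1/((m:ℝ)+1) ≤ Real.log ((m:ℝ)+1) - Real.log m := by
  have hm0 : (0:ℝ) < m := by exact_mod_cast hm
  have := log_ge (((m:ℝ)+1)/(m:ℝ)) (by positivity)
  rw [Real.log_div (by positivity) (ne_of_gt hm0)] at this
  have h2 : 1 - 1/(((m:ℝ)+1)/(m:ℝ)) = 1/((m:ℝ)+1) := by
    rw [one_div_div]; field_simp; ring
  linarith [h2 ▸ this]

lemma sum_inv_le (n : ℕ) (hn : 1 ≤ n) :
    ∑ r ∈ Ico 2 (n+1), (1 : ℝ)/(r:ℝ) ≤ Real.log n := by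
  induction n, hn using Nat.le_induction with
  | base => simp
  | succ m hm ih =>
    rw [Finset.sum_Ico_succ_top (by omega)]
    have h1 := log_diff_ge m hm
    push_cast
    push_cast at ih
    linarith

lemma sum_inv_ge (n : ℕ) (hn : 2 ≤ n) :
    Real.log n - 1 ≤ ∑ r ∈ Ico 2 n, (1 : ℝ)/(r:ℝ) := by
  induction n, hn using Nat.le_induction with
  | base =>
    simp
    have := Real.log_le_sub_one_of_pos (show (0:ℝ) < 2 by norm_num)
    linarith
  | succ m hm ih =>
    rw [Finset.sum_Ico_succ_top (by omega)]
    have h1 := log_diff_le m (by omega)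
    have hm0 : (0:ℝ) < m := by positivity
    push_cast
    push_cast at ih
    linarith

lemma sum_tele_eq (n : ℕ) (hn : 2 ≤ n) :
    ∑ r ∈ Ico 2 n, (1:ℝ)/(((r:ℝ)-1)*(r:ℝ)) = 1 - 1/((n:ℝ)-1) := by
  induction n, hn using Nat.le_induction with
  | base => rw [Finset.Ico_eq_empty (by omega)]; norm_num
  | succ m hm ih =>
    rw [Finset.sum_Ico_succ_top (by omega), ih]
    have hm1 : (1:ℝ) < (m:ℝ) := by exact_mod_cast hm.trans_lt' one_lt_two
    have hm0 : (0:ℝ) < (m:ℝ) := by linarith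
    push_cast
    have hne1 : (m:ℝ) - 1 ≠ 0 := by linarith
    have hne : (m:ℝ) ≠ 0 := by linarith
    rw [show (m:ℝ)+1-1 = m by ring]
    field_simp
    ring

lemma sum_tele (n : ℕ) :
    ∑ r ∈ Ico 2 n, (1:ℝ)/(((r:ℝ)-1)*(r:ℝ)) ≤ 1 := by
  rcases Nat.lt_or_ge n 2 with h | h
  · rw [Finset.Ico_eq_empty (by omega)]; simp
  · rw [sum_tele_eq n h]
    have hm1 : (1:ℝ) < (n:ℝ) := by
      have : 2 ≤ (n:ℝ) := by exact_mod_cast h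
      linarith
    have hpos : (0:ℝ) < (n:ℝ) - 1 := by linarith
    have : 0 < 1/((n:ℝ)-1) := by positivity
    linarith

lemma rho_neg (H : ℝ) (r : ℤ) : rho H (-r) = rho H r := by
  unfold rho
  push_cast
  rw [show -(r:ℝ) + 1 = -((r:ℝ) - 1) by ring, show -(r:ℝ) - 1 = -((r:ℝ) + 1) by ring,
    abs_neg, abs_neg, abs_neg]
  ring


set_option maxHeartbeats 1600000 in
/-- Estimate `1 − A_{q−1}(n) = O(1/log n)`: for `q ≥ 2` and `H = 1−1/(2q)`, there is `C > 0`
such that for every `n ≥ 2`,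
`|1 - (1/(2 c_q n log n)) Σ_{k,l=0}^{n−1} ρ_H(k−l)^q| ≤ C / log n`. -/
theorem A_q_minus_one_estimate (q : ℕ) (hq : 2 ≤ q) :
    ∃ C > 0, ∀ n : ℕ, 2 ≤ n →
      |1 - (1 / (2 * ((2*(q:ℝ) - 1) * ((q:ℝ) - 1) / (2*(q:ℝ)^2)) ^ q * (n:ℝ) * Real.log n)) *
            ∑ k ∈ range n, ∑ l ∈ range n, rho (1 - 1/(2*(q:ℝ))) ((k:ℤ) - (l:ℤ)) ^ q|
        ≤ C / Real.log n := by
  have hq2 : (2:ℝ) ≤ (q:ℝ) := by exact_mod_cast hq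
  set c : ℝ := (2*(q:ℝ) - 1) * ((q:ℝ) - 1) / (2*(q:ℝ)^2) with hcdef
  have hc : 0 < c := by
    apply div_pos
    · nlinarith
    · nlinarith
  set cq : ℝ := c ^ q with hcqdef
  have hcq : 0 < cq := pow_pos hc q
  set H : ℝ := 1 - 1/(2*(q:ℝ)) with hHdef
  set f : ℤ → ℝ := fun r => rho H r ^ q with hfdef
  have hHα : 2 * H = 2 - 1/(q:ℝ) := by
    rw [hHdef]; field_simp
  have hα1 : (1:ℝ) ≤ 2 * H := by
    rw [hHα]
    have : 1/(q:ℝ) ≤ 1 := by rw [div_le_one (by linarith)]; linarith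
    linarith
  have hα2 : 2 * H ≤ 2 := by
    rw [hHα]
    have : 0 < 1/(q:ℝ) := by positivity
    linarith
  have hα0 : (2*H) ≠ 0 := ne_of_gt (by linarith : (0:ℝ) < 2*H)
  have hf0 : f 0 = 1 := by
    have h0 : rho H 0 = 1 := by
      unfold rho
      norm_num
      rw [Real.zero_rpow hα0]
      norm_num
    rw [hfdef]; simp [h0]
  have hf1 : |f 1| ≤ 1 := by
    have h1 : rho H 1 = ((2:ℝ) ^ (2*H) - 2) / 2 := by
      unfold rho
      norm_num
      rw [Real.zero_rpow hα0]
    have h2 : (2:ℝ) ≤ (2:ℝ) ^ (2*H) := by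
      calc (2:ℝ) = (2:ℝ) ^ (1:ℝ) := (Real.rpow_one 2).symm
        _ ≤ (2:ℝ) ^ (2*H) := Real.rpow_le_rpow_of_exponent_le one_le_two hα1
    have h3 : (2:ℝ) ^ (2*H) ≤ 4 := by
      calc (2:ℝ) ^ (2*H) ≤ (2:ℝ) ^ (2:ℝ) := Real.rpow_le_rpow_of_exponent_le one_le_two hα2
        _ = 4 := by
          rw [show (2:ℝ) = ((2:ℕ):ℝ) by norm_num, Real.rpow_natCast]; norm_num
    have hr0 : 0 ≤ rho H 1 := by rw [h1]; linarith
    have hr1 : rho H 1 ≤ 1 := by rw [h1]; linarith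
    rw [hfdef]
    simp only
    rw [abs_of_nonneg (pow_nonneg hr0 q)]
    exact pow_le_one₀ hr0 hr1
  have herr : ∀ r : ℕ, 2 ≤ r → |f (r:ℤ) - cq / (r:ℝ)| ≤ cq * (1/(((r:ℝ)-1)*(r:ℝ))) := by
    intro r hr
    obtain ⟨θ, ht1, ht2, ht0, heq⟩ := rho_pow_eq q hq r (by omega)
    have hfr : f (r:ℤ) = cq / θ := heq
    have hr2 : (2:ℝ) ≤ (r:ℝ) := by exact_mod_cast hr
    have hr1pos : (0:ℝ) < (r:ℝ) - 1 := by linarith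
    have hrpos : (0:ℝ) < (r:ℝ) := by linarith
    have hkey : |1/θ - 1/(r:ℝ)| ≤ 1/(((r:ℝ)-1)*(r:ℝ)) := by
      have hu : 1/θ ≤ 1/((r:ℝ)-1) := one_div_le_one_div_of_le hr1pos ht1.le
      have hl : 1/((r:ℝ)+1) ≤ 1/θ := one_div_le_one_div_of_le ht0 ht2.le
      rw [abs_le]
      constructor
      · have e1 : 1/(r:ℝ) - 1/((r:ℝ)+1) = 1/((r:ℝ)*((r:ℝ)+1)) := by
          field_simp; ring
        have e2 : 1/((r:ℝ)*((r:ℝ)+1)) ≤ 1/(((r:ℝ)-1)*(r:ℝ)) := by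
          apply one_div_le_one_div_of_le (by nlinarith)
          nlinarith
        linarith
      · have e1 : 1/((r:ℝ)-1) - 1/(r:ℝ) = 1/(((r:ℝ)-1)*(r:ℝ)) := by
          field_simp; ring
        linarith
    have hsplit : f (r:ℤ) - cq/(r:ℝ) = cq * (1/θ - 1/(r:ℝ)) := by
      rw [hfr]; ring
    rw [hsplit, abs_mul, abs_of_pos hcq]
    exact mul_le_mul_of_nonneg_left hkey hcq.le
  refine ⟨(3 + 6*cq)/(2*cq), by positivity, ?_⟩
  intro n hn
  have hn2 : (2:ℝ) ≤ (n:ℝ) := by exact_mod_cast hn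
  have hn0 : (0:ℝ) < n := by linarith
  have hlog : 0 < Real.log n := Real.log_pos (by linarith)
  have hsym : ∑ r ∈ range n, ((n:ℝ) - (r:ℝ)) * (f (r:ℤ) + f (-(r:ℤ)))
      = ∑ r ∈ range n, ((n:ℝ) - (r:ℝ)) * (2 * f (r:ℤ)) := by
    refine Finset.sum_congr rfl fun r _ => ?_
    rw [hfdef]
    simp only
    rw [rho_neg]
    ring
  set G : ℕ → ℝ := fun r => ((n:ℝ) - (r:ℝ)) * (2 * f (r:ℤ)) with hGdef
  have hsplitG : ∑ r ∈ range n, G r = G 0 + G 1 + ∑ r ∈ Ico 2 n, G r := by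
    rw [Finset.range_eq_Ico, Finset.sum_eq_sum_Ico_succ_bot (by omega : 0 < n),
      Finset.sum_eq_sum_Ico_succ_bot (by omega : 1 < n)]
    ring
  have hG0 : G 0 = 2 * (n:ℝ) := by
    rw [hGdef]; simp only; rw [show ((0:ℕ):ℤ) = (0:ℤ) by norm_num, hf0]; push_cast; ring
  have hG1 : |G 1| ≤ 2 * (n:ℝ) := by
    rw [hGdef]; simp only
    rw [abs_mul, abs_mul]
    have h1 : |(n:ℝ) - ((1:ℕ):ℝ)| ≤ (n:ℝ) := by
      rw [abs_of_nonneg (by push_cast; linarith)]; push_cast; linarith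
    have h2 : |(2:ℝ)| = 2 := by norm_num
    calc |(n:ℝ) - ((1:ℕ):ℝ)| * (|(2:ℝ)| * |f ((1:ℕ):ℤ)|)
        ≤ (n:ℝ) * (2 * 1) := by
          apply mul_le_mul h1 _ (by positivity) hn0.le
          rw [h2]
          apply mul_le_mul_of_nonneg_left _ (by norm_num)
          exact_mod_cast hf1
      _ = 2 * (n:ℝ) := by ring
  set Hsum : ℝ := ∑ r ∈ Ico 2 n, (1:ℝ)/(r:ℝ) with hHsumdef
  set Esum : ℝ := ∑ r ∈ Ico 2 n, ((n:ℝ) - (r:ℝ)) * (f (r:ℤ) - cq/(r:ℝ)) with hEsumdef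
  have hcardR : ((Ico 2 n).card : ℝ) = (n:ℝ) - 2 := by
    rw [Nat.card_Ico]
    push_cast [Nat.cast_sub hn]
    ring
  have hIco : ∑ r ∈ Ico 2 n, G r
      = 2*cq*(n:ℝ)*Hsum - 2*cq*((n:ℝ) - 2) + 2*Esum := by
    have hterm : ∀ r ∈ Ico 2 n, G r
        = 2*cq*(n:ℝ)*(1/(r:ℝ)) - 2*cq
          + 2*(((n:ℝ) - (r:ℝ)) * (f (r:ℤ) - cq/(r:ℝ))) := by
      intro r hr
      have hr2 : 2 ≤ r := (Finset.mem_Ico.mp hr).1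
      have hrpos : (0:ℝ) < (r:ℝ) := by
        have : (2:ℝ) ≤ (r:ℝ) := by exact_mod_cast hr2
        linarith
      rw [hGdef]
      simp only
      field_simp
      ring
    rw [Finset.sum_congr rfl hterm, Finset.sum_add_distrib, Finset.sum_sub_distrib,
      Finset.sum_const, nsmul_eq_mul, hcardR, ← Finset.mul_sum, ← Finset.mul_sum]
    rw [hHsumdef, hEsumdef]
    ring
  have hHb : |Hsum - Real.log n| ≤ 1 := by
    rw [abs_le]
    constructor
    · have := sum_inv_ge n hn
      rw [hHsumdef]; linarith
    · obtain ⟨m, rfl⟩ : ∃ m, n = m + 1 := ⟨n-1, by omega⟩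
      have h1 := sum_inv_le m (by omega)
      have h2 : Real.log m ≤ Real.log (m+1) := by
        apply Real.log_le_log
        · have : (1:ℕ) ≤ m := by omega
          exact_mod_cast Nat.lt_of_lt_of_le Nat.zero_lt_one this
        · linarith [show (0:ℝ) ≤ 1 by norm_num]
      rw [hHsumdef]
      push_cast at h1 h2 ⊢
      linarith
  have hEb : |Esum| ≤ cq * (n:ℝ) := by
    rw [hEsumdef]
    calc |∑ r ∈ Ico 2 n, ((n:ℝ) - (r:ℝ)) * (f (r:ℤ) - cq/(r:ℝ))|
        ≤ ∑ r ∈ Ico 2 n, |((n:ℝ) - (r:ℝ)) * (f (r:ℤ) - cq/(r:ℝ))| :=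
          Finset.abs_sum_le_sum_abs _ _
      _ ≤ ∑ r ∈ Ico 2 n, (n:ℝ) * (cq * (1/(((r:ℝ)-1)*(r:ℝ)))) := by
          refine Finset.sum_le_sum fun r hr => ?_
          obtain ⟨hr2, hrn⟩ := Finset.mem_Ico.mp hr
          have hrn' : (r:ℝ) ≤ (n:ℝ) := by exact_mod_cast hrn.le
          rw [abs_mul]
          apply mul_le_mul
          · rw [abs_of_nonneg (by linarith)]
            have : (0:ℝ) ≤ (r:ℝ) := by positivity
            linarith
          · exact herr r hr2
          · exact abs_nonneg _
          · exact hn0.le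
      _ = (n:ℝ) * cq * ∑ r ∈ Ico 2 n, (1:ℝ)/(((r:ℝ)-1)*(r:ℝ)) := by
          rw [Finset.mul_sum]
          refine Finset.sum_congr rfl fun r _ => by ring
      _ ≤ (n:ℝ) * cq * 1 := by
          apply mul_le_mul_of_nonneg_left (sum_tele n) (by positivity)
      _ = cq * (n:ℝ) := by ring
  -- the master bound
  have hM : |(∑ r ∈ range n, G r - (n:ℝ) * f 0) - 2*cq*(n:ℝ)*Real.log n|
      ≤ (3 + 6*cq) * (n:ℝ) := by
    have hrew : (∑ r ∈ range n, G r - (n:ℝ) * f 0) - 2*cq*(n:ℝ)*Real.log n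
        = (n:ℝ) + G 1 + 2*cq*(n:ℝ)*(Hsum - Real.log n) - 2*cq*((n:ℝ)-2) + 2*Esum := by
      rw [hsplitG, hIco, hG0, hf0]
      ring
    rw [hrew]
    have b1 := abs_le.mp hG1
    have b2 := abs_le.mp hHb
    have b3 := abs_le.mp hEb
    have b2' : |2*cq*(n:ℝ)*(Hsum - Real.log n)| ≤ 2*cq*(n:ℝ) := by
      rw [abs_mul, abs_of_pos (show (0:ℝ) < 2*cq*(n:ℝ) by positivity)]
      calc 2*cq*(n:ℝ) * |Hsum - Real.log n| ≤ 2*cq*(n:ℝ) * 1 :=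
        mul_le_mul_of_nonneg_left hHb (by positivity)
        _ = 2*cq*(n:ℝ) := by ring
    have b2'' := abs_le.mp b2'
    rw [abs_le]
    constructor
    · nlinarith [hcq.le, hn0.le]
    · nlinarith [hcq.le, hn0.le]
  -- conclude
  rw [double_sum (fun r => rho H r ^ q) n]
  rw [hsym]
  set X : ℝ := ∑ r ∈ range n, G r - (n:ℝ) * f 0 with hXdef
  have hD : (0:ℝ) < 2*cq*(n:ℝ)*Real.log n := by positivity
  have hrw : 1 - 1 / (2*cq*(n:ℝ)*Real.log n) * X
      = (2*cq*(n:ℝ)*Real.log n - X) / (2*cq*(n:ℝ)*Real.log n) := by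
    field_simp
  rw [hrw, abs_div, abs_of_pos hD]
  have hnum : |2*cq*(n:ℝ)*Real.log n - X| ≤ (3 + 6*cq) * (n:ℝ) := by
    rw [← abs_neg]
    have : -(2*cq*(n:ℝ)*Real.log n - X) = X - 2*cq*(n:ℝ)*Real.log n := by ring
    rw [this]
    exact hM
  calc |2*cq*(n:ℝ)*Real.log n - X| / (2*cq*(n:ℝ)*Real.log n)
      ≤ ((3 + 6*cq) * (n:ℝ)) / (2*cq*(n:ℝ)*Real.log n) :=
        (div_le_div_iff_of_pos_right hD).mpr hnum
    _ = (3 + 6*cq)/(2*cq) / Real.log n := by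
        rw [div_div]
        rw [div_eq_div_iff (by positivity) (by positivity)]
        ring
end

section
/- Fix integers q ≥ 2 and 0 ≤ r ≤ q−2. There exists a constant C > 0 such that for every integer n ≥ 2, Σ (k−l)^{−1} (l−i)^{−(q−1−r)/q} (i−j)^{−(r+1)/q} ≤ C n² log n, where the sum is over all integers 0 ≤ j < i < l < k ≤ n−1. -/
open Finset

lemma step_bound {a : ℝ} (ha : 0 < a) (ha1 : a < 1) (s : ℕ) :
    (s:ℝ) ^ (1-a) + (1-a) * ((s:ℝ)+1) ^ (-a) ≤ ((s:ℝ)+1) ^ (1-a) := by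
  set x := (s:ℝ) with hxdef
  have hx : 0 ≤ x := Nat.cast_nonneg s
  have hy : (0:ℝ) < x + 1 := by linarith
  set p : ℝ := 1 - a with hp
  have hp0 : 0 < p := by rw [hp]; linarith
  have hp1 : p ≤ 1 := by rw [hp]; linarith
  have hbase : (0:ℝ) ≤ 1 + -(p/(x+1)) := by
    have : p/(x+1) ≤ 1 := by rw [div_le_one hy]; linarith
    linarith
  have hz : (-1:ℝ) ≤ -(p/(x+1)) := by
    have h0 : 0 ≤ p / (x+1) := by positivity
    linarith [hbase]
  have hB := one_add_mul_self_le_rpow_one_add hz (p := 1/p)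
    (by rw [le_div_iff₀ hp0]; linarith)
  have hsimp : 1 + (1/p) * (-(p/(x+1))) = x/(x+1) := by field_simp; ring
  rw [hsimp] at hB
  have h1 : (x/(x+1)) ^ p ≤ 1 + -(p/(x+1)) := by
    calc (x/(x+1)) ^ p ≤ ((1 + -(p/(x+1))) ^ (1/p)) ^ p :=
          Real.rpow_le_rpow (by positivity) hB hp0.le
      _ = 1 + -(p/(x+1)) := by
          rw [← Real.rpow_mul hbase, one_div, inv_mul_cancel₀ hp0.ne', Real.rpow_one]
  have h2 : x ^ p ≤ (1 + -(p/(x+1))) * (x+1) ^ p := by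
    have := mul_le_mul_of_nonneg_right h1 (Real.rpow_nonneg hy.le p)
    rwa [Real.div_rpow hx hy.le, div_mul_cancel₀ _ (by positivity : ((x+1):ℝ) ^ p ≠ 0)] at this
  have h3 : (p/(x+1)) * (x+1) ^ p = p * (x+1) ^ (-a) := by
    have : (x+1) ^ (-a) = (x+1) ^ p / (x+1) := by
      rw [show (-a : ℝ) = p - 1 by rw [hp]; ring, Real.rpow_sub hy, Real.rpow_one]
    rw [this]; field_simp
  have hexp : (1 + -(p/(x+1))) * (x+1) ^ p = (x+1) ^ p - (p/(x+1)) * (x+1) ^ p := by ring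
  rw [hexp, h3] at h2
  linarith

lemma sum_rpow_le {a : ℝ} (ha : 0 < a) (ha1 : a < 1) (s : ℕ) :
    ∑ m ∈ range s, ((m:ℝ)+1) ^ (-a) ≤ (s:ℝ) ^ (1-a) / (1-a) := by
  induction s with
  | zero => simp [Real.zero_rpow (by linarith : (1:ℝ)-a ≠ 0)]
  | succ s ih =>
    rw [sum_range_succ]
    have h1a : (0:ℝ) < 1 - a := by linarith
    have hstep := step_bound ha ha1 s
    have key : (s:ℝ) ^ (1-a)/(1-a) + ((s:ℝ)+1) ^ (-a) ≤ ((s:ℝ)+1) ^ (1-a)/(1-a) := by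
      rw [div_add' _ _ _ h1a.ne', div_le_div_iff₀ h1a h1a]
      nlinarith [hstep]
    push_cast
    linarith [ih, key]

lemma sum_dist_rpow_le {a : ℝ} (ha : 0 < a) (ha1 : a < 1) {s n : ℕ} (hs : s ≤ n) :
    ∑ j ∈ range s, ((s:ℝ) - (j:ℝ)) ^ (-a) ≤ (n:ℝ) ^ (1-a) / (1-a) := by
  have hre : ∑ j ∈ range s, ((s:ℝ) - (j:ℝ)) ^ (-a)
      = ∑ m ∈ range s, ((m:ℝ)+1) ^ (-a) := by
    rw [← Finset.sum_range_reflect]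
    apply Finset.sum_congr rfl
    intro j hj
    have hj' : j < s := mem_range.mp hj
    congr 1
    have h1 : ((s - 1 - j : ℕ) : ℝ) = (s:ℝ) - 1 - (j:ℝ) := by
      have : (s - 1 - j : ℕ) = s - (j + 1) := by omega
      rw [this, Nat.cast_sub (by omega)]
      push_cast; ring
    rw [h1]; ring
  rw [hre]
  calc ∑ m ∈ range s, ((m:ℝ)+1) ^ (-a) ≤ (s:ℝ) ^ (1-a)/(1-a) := sum_rpow_le ha ha1 s
    _ ≤ (n:ℝ) ^ (1-a)/(1-a) := by
        have : (s:ℝ) ^ (1-a) ≤ (n:ℝ) ^ (1-a) :=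
          Real.rpow_le_rpow (Nat.cast_nonneg s) (by exact_mod_cast hs) (by linarith)
        apply div_le_div_of_nonneg_right this (by linarith)

lemma sum_dist_inv_le {k n : ℕ} (hk : k ≤ n) (hn : 1 ≤ n) :
    ∑ l ∈ range k, ((k:ℝ) - (l:ℝ)) ^ (-1:ℝ) ≤ 1 + Real.log n := by
  have hre : ∑ l ∈ range k, ((k:ℝ) - (l:ℝ)) ^ (-1:ℝ)
      = ∑ m ∈ range k, ((m:ℝ)+1) ^ (-1:ℝ) := by
    rw [← Finset.sum_range_reflect]
    apply Finset.sum_congr rfl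
    intro j hj
    have hj' : j < k := mem_range.mp hj
    congr 1
    have h1 : ((k - 1 - j : ℕ) : ℝ) = (k:ℝ) - 1 - (j:ℝ) := by
      have : (k - 1 - j : ℕ) = k - (j + 1) := by omega
      rw [this, Nat.cast_sub (by omega)]
      push_cast; ring
    rw [h1]; ring
  rw [hre]
  have h2 : ∑ m ∈ range k, ((m:ℝ)+1) ^ (-1:ℝ) = (harmonic k : ℝ) := by
    rw [harmonic, Rat.cast_sum]
    apply Finset.sum_congr rfl
    intro m _
    rw [Real.rpow_neg_one]
    push_cast
    ring
  rw [h2]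
  calc (harmonic k : ℝ) ≤ 1 + Real.log k := harmonic_le_one_add_log k
    _ ≤ 1 + Real.log n := by
        rcases Nat.eq_zero_or_pos k with h | h
        · simp [h]
          exact Real.log_nonneg (by exact_mod_cast hn)
        · have := Real.log_le_log (by exact_mod_cast h) (by exact_mod_cast hk : (k:ℝ) ≤ n)
          linarith

/-- Key combinatorial bound for the quadruple sum in the proof of Theorem 1.2:
for integers `q ≥ 2` and `0 ≤ r ≤ q−2`, there is `C > 0` such that for every `n ≥ 2`,
`Σ_{0 ≤ j < i < l < k ≤ n−1} (k−l)^{−1} (l−i)^{−(q−1−r)/q} (i−j)^{−(r+1)/q} ≤ C n² log n`. -/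
theorem quadruple_sum_bound (q r : ℕ) (hq : 2 ≤ q) (hr : r + 2 ≤ q) :
    ∃ C > 0, ∀ n : ℕ, 2 ≤ n →
      ∑ k ∈ range n, ∑ l ∈ range k, ∑ i ∈ range l, ∑ j ∈ range i,
          ((k:ℝ) - (l:ℝ)) ^ (-1 : ℝ) *
            ((l:ℝ) - (i:ℝ)) ^ (-(((q:ℝ) - 1 - (r:ℝ)) / (q:ℝ))) *
            ((i:ℝ) - (j:ℝ)) ^ (-(((r:ℝ) + 1) / (q:ℝ)))
        ≤ C * (n:ℝ) ^ 2 * Real.log n := by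
  have hq0 : (0:ℝ) < q := by positivity
  set a : ℝ := ((r:ℝ) + 1) / (q:ℝ) with hadef
  set b : ℝ := ((q:ℝ) - 1 - (r:ℝ)) / (q:ℝ) with hbdef
  have hrq : (r:ℝ) + 2 ≤ (q:ℝ) := by exact_mod_cast hr
  have ha0 : 0 < a := by rw [hadef]; positivity
  have ha1 : a < 1 := by rw [hadef, div_lt_one hq0]; linarith
  have hb0 : 0 < b := by rw [hbdef]; apply div_pos (by linarith) hq0
  have hb1 : b < 1 := by rw [hbdef, div_lt_one hq0]; linarith
  have hab : a + b = 1 := by rw [hadef, hbdef]; field_simp; ring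
  have hlog2 : (0:ℝ) < Real.log 2 := Real.log_pos (by norm_num)
  refine ⟨(1 + (Real.log 2)⁻¹) / ((1-a)*(1-b)),
    div_pos (by positivity) (by nlinarith), ?_⟩
  intro n hn
  have hn0 : (0:ℝ) < n := by positivity
  have hn1 : 1 ≤ n := by omega
  set A : ℝ := (n:ℝ) ^ (1-a) / (1-a) with hA
  set B : ℝ := (n:ℝ) ^ (1-b) / (1-b) with hB
  have hA0 : 0 ≤ A := by
    rw [hA]; exact div_nonneg (Real.rpow_nonneg hn0.le _) (by linarith)
  have hB0 : 0 ≤ B := by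
    rw [hB]; exact div_nonneg (Real.rpow_nonneg hn0.le _) (by linarith)
  have hlogn : Real.log 2 ≤ Real.log n :=
    Real.log_le_log (by norm_num) (by exact_mod_cast hn)
  -- Step 1: bound inner sum over j
  have step1 : ∀ k ∈ range n, ∀ l ∈ range k, ∀ i ∈ range l,
      ∑ j ∈ range i,
          ((k:ℝ) - (l:ℝ)) ^ (-1 : ℝ) * ((l:ℝ) - (i:ℝ)) ^ (-b) * ((i:ℝ) - (j:ℝ)) ^ (-a)
        ≤ (((k:ℝ) - (l:ℝ)) ^ (-1 : ℝ) * ((l:ℝ) - (i:ℝ)) ^ (-b)) * A := by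
    intro k hk l hl i hi
    have hkn : k < n := mem_range.mp hk
    have hlk : l < k := mem_range.mp hl
    have hil : i < l := mem_range.mp hi
    have hc : 0 ≤ ((k:ℝ) - (l:ℝ)) ^ (-1 : ℝ) := by
      apply Real.rpow_nonneg
      have : (l:ℝ) < k := by exact_mod_cast hlk
      linarith
    have hd : 0 ≤ ((l:ℝ) - (i:ℝ)) ^ (-b) := by
      apply Real.rpow_nonneg
      have : (i:ℝ) < l := by exact_mod_cast hil
      linarith
    rw [← Finset.mul_sum]
    apply mul_le_mul_of_nonneg_left _ (mul_nonneg hc hd)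
    exact sum_dist_rpow_le ha0 ha1 (by omega : i ≤ n)
  -- Step 2: bound sum over i
  have step2 : ∀ k ∈ range n, ∀ l ∈ range k,
      ∑ i ∈ range l, (((k:ℝ) - (l:ℝ)) ^ (-1 : ℝ) * ((l:ℝ) - (i:ℝ)) ^ (-b)) * A
        ≤ ((k:ℝ) - (l:ℝ)) ^ (-1 : ℝ) * (B * A) := by
    intro k hk l hl
    have hkn : k < n := mem_range.mp hk
    have hlk : l < k := mem_range.mp hl
    have hc : 0 ≤ ((k:ℝ) - (l:ℝ)) ^ (-1 : ℝ) := by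
      apply Real.rpow_nonneg
      have : (l:ℝ) < k := by exact_mod_cast hlk
      linarith
    have : ∀ i ∈ range l, (((k:ℝ) - (l:ℝ)) ^ (-1 : ℝ) * ((l:ℝ) - (i:ℝ)) ^ (-b)) * A
        = (((k:ℝ) - (l:ℝ)) ^ (-1 : ℝ) * A) * ((l:ℝ) - (i:ℝ)) ^ (-b) := by
      intro i _; ring
    rw [Finset.sum_congr rfl this, ← Finset.mul_sum]
    have hsum : ∑ i ∈ range l, ((l:ℝ) - (i:ℝ)) ^ (-b) ≤ B :=
      sum_dist_rpow_le hb0 hb1 (by omega : l ≤ n)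
    calc (((k:ℝ) - (l:ℝ)) ^ (-1 : ℝ) * A) * ∑ i ∈ range l, ((l:ℝ) - (i:ℝ)) ^ (-b)
        ≤ (((k:ℝ) - (l:ℝ)) ^ (-1 : ℝ) * A) * B :=
          mul_le_mul_of_nonneg_left hsum (mul_nonneg hc hA0)
      _ = ((k:ℝ) - (l:ℝ)) ^ (-1 : ℝ) * (B * A) := by ring
  -- Assemble
  have main : ∑ k ∈ range n, ∑ l ∈ range k, ∑ i ∈ range l, ∑ j ∈ range i,
          ((k:ℝ) - (l:ℝ)) ^ (-1 : ℝ) * ((l:ℝ) - (i:ℝ)) ^ (-b) * ((i:ℝ) - (j:ℝ)) ^ (-a)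
        ≤ (B * A) * ((n:ℝ) * (1 + Real.log n)) := by
    calc ∑ k ∈ range n, ∑ l ∈ range k, ∑ i ∈ range l, ∑ j ∈ range i,
            ((k:ℝ) - (l:ℝ)) ^ (-1 : ℝ) * ((l:ℝ) - (i:ℝ)) ^ (-b) * ((i:ℝ) - (j:ℝ)) ^ (-a)
        ≤ ∑ k ∈ range n, ∑ l ∈ range k, ((k:ℝ) - (l:ℝ)) ^ (-1 : ℝ) * (B * A) := by
          apply sum_le_sum; intro k hk
          apply sum_le_sum; intro l hl
          calc ∑ i ∈ range l, ∑ j ∈ range i,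
                ((k:ℝ) - (l:ℝ)) ^ (-1 : ℝ) * ((l:ℝ) - (i:ℝ)) ^ (-b) * ((i:ℝ) - (j:ℝ)) ^ (-a)
              ≤ ∑ i ∈ range l, (((k:ℝ) - (l:ℝ)) ^ (-1 : ℝ) * ((l:ℝ) - (i:ℝ)) ^ (-b)) * A :=
                sum_le_sum (fun i hi => step1 k hk l hl i hi)
            _ ≤ ((k:ℝ) - (l:ℝ)) ^ (-1 : ℝ) * (B * A) := step2 k hk l hl
      _ = (B * A) * ∑ k ∈ range n, ∑ l ∈ range k, ((k:ℝ) - (l:ℝ)) ^ (-1 : ℝ) := by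
          rw [Finset.mul_sum]
          apply Finset.sum_congr rfl
          intro k _
          rw [Finset.mul_sum]
          apply Finset.sum_congr rfl
          intro l _
          ring
      _ ≤ (B * A) * ((n:ℝ) * (1 + Real.log n)) := by
          apply mul_le_mul_of_nonneg_left _ (mul_nonneg hB0 hA0)
          calc ∑ k ∈ range n, ∑ l ∈ range k, ((k:ℝ) - (l:ℝ)) ^ (-1 : ℝ)
              ≤ ∑ k ∈ range n, (1 + Real.log n) :=
                sum_le_sum (fun k hk =>
                  sum_dist_inv_le (le_of_lt (mem_range.mp hk)) hn1)
            _ = (n:ℝ) * (1 + Real.log n) := by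
                rw [Finset.sum_const, card_range, nsmul_eq_mul]
  have hBA : B * A = (n:ℝ) / ((1-b)*(1-a)) := by
    rw [hA, hB, div_mul_div_comm, ← Real.rpow_add hn0,
      show (1-b)+(1-a) = 1 by linarith, Real.rpow_one]
  have hL : 1 + Real.log n ≤ (1 + (Real.log 2)⁻¹) * Real.log n := by
    have h1 : 1 ≤ (Real.log 2)⁻¹ * Real.log n := by
      rw [inv_mul_eq_div, le_div_iff₀ hlog2]
      linarith
    have h2 : (1 + (Real.log 2)⁻¹) * Real.log n
        = Real.log n + (Real.log 2)⁻¹ * Real.log n := by ring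
    linarith
  calc ∑ k ∈ range n, ∑ l ∈ range k, ∑ i ∈ range l, ∑ j ∈ range i,
          ((k:ℝ) - (l:ℝ)) ^ (-1 : ℝ) * ((l:ℝ) - (i:ℝ)) ^ (-b) * ((i:ℝ) - (j:ℝ)) ^ (-a)
      ≤ (B * A) * ((n:ℝ) * (1 + Real.log n)) := main
    _ = ((n:ℝ) ^ 2 * (1 + Real.log n)) / ((1-b)*(1-a)) := by rw [hBA]; ring
    _ ≤ ((n:ℝ) ^ 2 * ((1 + (Real.log 2)⁻¹) * Real.log n)) / ((1-b)*(1-a)) := by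
        apply div_le_div_of_nonneg_right
          (mul_le_mul_of_nonneg_left hL (by positivity)) (by nlinarith)
    _ = (1 + (Real.log 2)⁻¹) / ((1-a)*(1-b)) * (n:ℝ) ^ 2 * Real.log n := by
        field_simp
end
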